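/- arXiv:1508.00481 — 5 statements merged into one kernel-verified Lean document; each statement's English description precedes it below -/
import Mathlib

section
/- There exist a real constant c > 0 and an integer v₀ such that for every integer v ≥ v₀ there exists a 6-even-free triple packing (V,ℬ) of order v with at least c·v^{9/5} blocks. -/
/-- A configuration is even if every point lies in an even number of its blocks. -/
def IsEvenConfig {V : Type*} [DecidableEq V] (C : Finset (Finset V)) : Prop :=
  ∀ p : V, Even (C.filter fun b => p ∈ b).card

open Finset

set_option maxHeartbeats 2000000

namespace SixEvenFree

open scoped Classical


abbrev Trip (v : ℕ) := {b : Finset (Fin v) // b.card = 3}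

noncomputable def NT (v : ℕ) : ℕ := Fintype.card (Trip v)

noncomputable def pinnedSet (v Tn : ℕ) (C : Finset (Finset (Fin v))) :
    Finset (Fin Tn → Trip v) :=
  univ.filter fun f => ∀ b ∈ C, ∃ i, (f i).1 = b

lemma pinnedSet_card_mul (v Tn : ℕ) (C : Finset (Finset (Fin v)))
    (h3 : ∀ b ∈ C, b.card = 3) :
    (pinnedSet v Tn C).card * NT v ^ C.card ≤ Tn ^ C.card * NT v ^ Tn := by
  classical
  set j := C.card with hj
  -- pinned value
  let pin : {x // x ∈ C} → Trip v := fun b => ⟨b.1, h3 b.1 b.2⟩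
  let Q : ({x // x ∈ C} → Fin Tn) → Finset (Fin Tn → Trip v) :=
    fun σ => univ.filter (fun f => ∀ b : {x // x ∈ C}, f (σ b) = pin b)
  have step1 : pinnedSet v Tn C ⊆
      (univ : Finset ({x // x ∈ C} → Fin Tn)).biUnion Q := by
    intro f hf
    simp only [pinnedSet, mem_filter, mem_univ, true_and] at hf
    choose g hg using hf
    refine mem_biUnion.2 ⟨fun b => g b.1 b.2, mem_univ _, ?_⟩
    simp only [Q, mem_filter, mem_univ, true_and]
    intro b
    exact Subtype.ext (hg b.1 b.2)
  have step3 : ∀ σ : {x // x ∈ C} → Fin Tn, (Q σ).card * NT v ^ j ≤ NT v ^ Tn := by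
    intro σ
    by_cases hσ : Function.Injective σ
    · -- injective case
      set Φ : ((Fin Tn → Trip v) × ({x // x ∈ C} → Trip v)) → (Fin Tn → Trip v) :=
        fun p i => if h : ∃ b, σ b = i then p.2 h.choose else p.1 i with hΦ
      have Φapp : ∀ p b, Φ p (σ b) = p.2 b := by
        intro p b
        have hc : ∃ b', σ b' = σ b := ⟨b, rfl⟩
        have : Φ p (σ b) = p.2 hc.choose := dif_pos hc
        rw [this]
        exact congrArg p.2 (hσ hc.choose_spec)
      have hcard : ((Q σ) ×ˢ (univ : Finset ({x // x ∈ C} → Trip v))).card ≤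
          (univ : Finset (Fin Tn → Trip v)).card := by
        apply Finset.card_le_card_of_injOn Φ (fun _ _ => mem_univ _)
        intro p hp p' hp' heq
        simp only [mem_coe, mem_product, mem_filter, mem_univ, true_and, and_true, Q] at hp hp'
        have hg : p.2 = p'.2 := by
          funext b
          rw [← Φapp p b, ← Φapp p' b, heq]
        have hf : p.1 = p'.1 := by
          funext i
          by_cases h : ∃ b, σ b = i
          · obtain ⟨b, rfl⟩ := h
            rw [hp b, hp' b]
          · have e1 : Φ p i = p.1 i := dif_neg h
            have e2 : Φ p' i = p'.1 i := dif_neg h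
            rw [← e1, ← e2, heq]
        exact Prod.ext hf hg
      have c1 : ((Q σ) ×ˢ (univ : Finset ({x // x ∈ C} → Trip v))).card
          = (Q σ).card * NT v ^ j := by
        rw [Finset.card_product, Finset.card_univ, Fintype.card_fun,
          Fintype.card_coe, NT]
      have c2 : (univ : Finset (Fin Tn → Trip v)).card = NT v ^ Tn := by
        rw [Finset.card_univ, Fintype.card_fun, Fintype.card_fin, NT]
      rw [← c1, ← c2]; exact hcard
    · -- non-injective: Q σ is empty
      have : Q σ = ∅ := by
        rw [Finset.eq_empty_iff_forall_notMem]
        intro f hf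
        simp only [Q, mem_filter, mem_univ, true_and] at hf
        rw [Function.not_injective_iff] at hσ
        obtain ⟨b, b', heq, hne⟩ := hσ
        apply hne
        have h1 : pin b = pin b' := by rw [← hf b, ← hf b', heq]
        have h2 : (pin b).1 = (pin b').1 := congrArg Subtype.val h1
        exact Subtype.ext h2
      simp [this]
  calc (pinnedSet v Tn C).card * NT v ^ j
      ≤ ((univ : Finset ({x // x ∈ C} → Fin Tn)).biUnion Q).card * NT v ^ j := by
        exact Nat.mul_le_mul_right _ (card_le_card step1)
    _ ≤ (∑ σ : {x // x ∈ C} → Fin Tn, (Q σ).card) * NT v ^ j := by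
        exact Nat.mul_le_mul_right _ card_biUnion_le
    _ = ∑ σ : {x // x ∈ C} → Fin Tn, (Q σ).card * NT v ^ j := by
        rw [Finset.sum_mul]
    _ ≤ ∑ _σ : {x // x ∈ C} → Fin Tn, NT v ^ Tn := Finset.sum_le_sum (fun σ _ => step3 σ)
    _ = Tn ^ j * NT v ^ Tn := by
        rw [Finset.sum_const, Finset.card_univ, Fintype.card_fun,
          Fintype.card_coe, Fintype.card_fin, smul_eq_mul]



lemma even_span {v : ℕ} (C : Finset (Finset (Fin v)))
    (h3 : ∀ b ∈ C, b.card = 3) (he : IsEvenConfig C) :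
    2 * (C.biUnion id).card ≤ 3 * C.card := by
  classical
  set U := C.biUnion id with hU
  have key : ∑ p ∈ U, (C.filter (fun b => p ∈ b)).card = ∑ b ∈ C, b.card := by
    have h1 : ∀ p, (C.filter (fun b => p ∈ b)).card = ∑ b ∈ C, ite (p ∈ b) 1 0 :=
      fun p => Finset.card_filter _ _
    have h2 : ∀ b ∈ C, (U.filter (fun p => p ∈ b)).card = b.card := by
      intro b hb
      congr 1
      apply Finset.Subset.antisymm
      · exact fun p hp => (Finset.mem_filter.1 hp).2
      · intro p hp
        exact Finset.mem_filter.2 ⟨Finset.mem_biUnion.2 ⟨b, hb, hp⟩, hp⟩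
    calc ∑ p ∈ U, (C.filter (fun b => p ∈ b)).card
        = ∑ p ∈ U, ∑ b ∈ C, ite (p ∈ b) 1 0 := by simp_rw [h1]
      _ = ∑ b ∈ C, ∑ p ∈ U, ite (p ∈ b) 1 0 := Finset.sum_comm
      _ = ∑ b ∈ C, (U.filter (fun p => p ∈ b)).card := by
          simp_rw [Finset.card_filter]
      _ = ∑ b ∈ C, b.card := Finset.sum_congr rfl h2
  have lower : ∀ p ∈ U, 2 ≤ (C.filter (fun b => p ∈ b)).card := by
    intro p hp
    obtain ⟨b, hb, hpb⟩ := Finset.mem_biUnion.1 hp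
    have hpos : 0 < (C.filter (fun b => p ∈ b)).card :=
      Finset.card_pos.2 ⟨b, Finset.mem_filter.2 ⟨hb, hpb⟩⟩
    obtain ⟨k, hk⟩ := he p
    omega
  calc 2 * U.card = ∑ _p ∈ U, 2 := by rw [Finset.sum_const, smul_eq_mul, mul_comm]
    _ ≤ ∑ p ∈ U, (C.filter (fun b => p ∈ b)).card := Finset.sum_le_sum lower
    _ = ∑ b ∈ C, b.card := key
    _ = 3 * C.card := by
        rw [Finset.sum_congr rfl h3, Finset.sum_const, smul_eq_mul, mul_comm]

lemma cover_exists {v : ℕ} (s : ℕ) (hv : 0 < v) (U : Finset (Fin v)) (hU : U.card ≤ s) :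
    ∃ P : Fin s → Fin v, ∀ u ∈ U, ∃ i, P i = u := by
  classical
  refine ⟨fun i => U.toList.getD i ⟨0, hv⟩, ?_⟩
  intro u hu
  have hmem : u ∈ U.toList := Finset.mem_toList.2 hu
  obtain ⟨k, hk⟩ := List.mem_iff_get.1 hmem
  have hlen : U.toList.length = U.card := Finset.length_toList U
  have hks : (k : ℕ) < s := lt_of_lt_of_le (hlen ▸ k.2) hU
  refine ⟨⟨k, hks⟩, ?_⟩
  simp only [List.getD_eq_getElem?_getD]
  rw [List.getElem?_eq_getElem k.2]
  simpa using hk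

lemma exists_triple_idx {v s : ℕ} (P : Fin s → Fin v) (b : Finset (Fin v)) (hb3 : b.card = 3)
    (hcov : ∀ x ∈ b, ∃ i, P i = x) :
    ∃ t : Fin s × Fin s × Fin s, ({P t.1, P t.2.1, P t.2.2} : Finset (Fin v)) = b := by
  obtain ⟨x, y, z, _, _, _, rfl⟩ := Finset.card_eq_three.1 hb3
  obtain ⟨i, hi⟩ := hcov x (by simp)
  obtain ⟨j, hj⟩ := hcov y (by simp)
  obtain ⟨k, hk⟩ := hcov z (by simp)
  exact ⟨⟨i, j, k⟩, by rw [hi, hj, hk]⟩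

lemma config_count {v : ℕ} (j s : ℕ) (hv : 0 < v)
    (S : Finset (Finset (Finset (Fin v))))
    (hS : ∀ C ∈ S, C.card = j ∧ (∀ b ∈ C, b.card = 3) ∧ (C.biUnion id).card ≤ s) :
    S.card ≤ v ^ s * (s * s * s) ^ j := by
  classical
  set decode : (Fin s → Fin v) × (Fin j → Fin s × Fin s × Fin s) → Finset (Finset (Fin v)) :=
    fun w => Finset.image
      (fun i => ({w.1 (w.2 i).1, w.1 (w.2 i).2.1, w.1 (w.2 i).2.2} : Finset (Fin v))) univ
    with hdecode
  have hsub : S ⊆ Finset.image decode univ := by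
    intro C hC
    obtain ⟨hcard, h3, hspan⟩ := hS C hC
    obtain ⟨P, hP⟩ := cover_exists s hv (C.biUnion id) hspan
    set e : Fin j → {x // x ∈ C} :=
      fun i => C.equivFin.symm ⟨i.1, by omega⟩ with he
    have hidx : ∀ i : Fin j, ∃ t : Fin s × Fin s × Fin s,
        ({P t.1, P t.2.1, P t.2.2} : Finset (Fin v)) = (e i).1 := by
      intro i
      refine exists_triple_idx P (e i).1 (h3 _ (e i).2) ?_
      intro x hx
      exact hP x (Finset.mem_biUnion.2 ⟨(e i).1, (e i).2, by simpa using hx⟩)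
    refine Finset.mem_image.2 ⟨⟨P, fun i => (hidx i).choose⟩, mem_univ _, ?_⟩
    apply Finset.Subset.antisymm
    · intro b hb
      simp only [hdecode, Finset.mem_image, mem_univ, true_and] at hb
      obtain ⟨i, rfl⟩ := hb
      rw [(hidx i).choose_spec]
      exact (e i).2
    · intro b hb
      set k := C.equivFin ⟨b, hb⟩ with hkdef
      have hkj : (k : ℕ) < j := by have := k.2; omega
      refine Finset.mem_image.2 ⟨⟨k.1, hkj⟩, mem_univ _, ?_⟩
      rw [(hidx _).choose_spec]
      show ((C.equivFin.symm ⟨(k : ℕ), by omega⟩ : {x // x ∈ C}) : Finset (Fin v)) = b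
      have h1 : (C.equivFin.symm k : {x // x ∈ C}) = ⟨b, hb⟩ := by
        rw [hkdef, Equiv.symm_apply_apply]
      exact congrArg Subtype.val h1
  calc S.card ≤ (Finset.image decode univ).card := card_le_card hsub
    _ ≤ (univ : Finset ((Fin s → Fin v) × (Fin j → Fin s × Fin s × Fin s))).card :=
        card_image_le
    _ = v ^ s * (s * s * s) ^ j := by
        simp only [card_univ, Fintype.card_prod, Fintype.card_fun, Fintype.card_fin]
        ring



noncomputable def B0 (v Tn : ℕ) (f : Fin Tn → Trip v) : Finset (Finset (Fin v)) :=
  Finset.image (fun i => (f i).1) univ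

noncomputable def PairBad (v : ℕ) : Finset ((Finset (Fin v)) × (Finset (Fin v))) :=
  univ.filter (fun q => q.1.card = 3 ∧ q.2.card = 3 ∧ q.1 ≠ q.2 ∧ 2 ≤ (q.1 ∩ q.2).card)

lemma pairBad_count {v : ℕ} (hv : 0 < v) : (PairBad v).card ≤ v ^ 4 * 4096 := by
  classical
  set decode2 : (Fin 4 → Fin v) × ((Fin 4 × Fin 4 × Fin 4) × (Fin 4 × Fin 4 × Fin 4)) →
      (Finset (Fin v)) × (Finset (Fin v)) :=
    fun w => (({w.1 w.2.1.1, w.1 w.2.1.2.1, w.1 w.2.1.2.2} : Finset (Fin v)),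
              ({w.1 w.2.2.1, w.1 w.2.2.2.1, w.1 w.2.2.2.2} : Finset (Fin v))) with hdecode2
  have hsub : PairBad v ⊆ Finset.image decode2 univ := by
    intro q hq
    simp only [PairBad, mem_filter, mem_univ, true_and] at hq
    obtain ⟨h1, h2, _hne, hint⟩ := hq
    have hUcard : (q.1 ∪ q.2).card ≤ 4 := by
      have := Finset.card_union_add_card_inter q.1 q.2
      omega
    obtain ⟨P, hP⟩ := cover_exists 4 hv (q.1 ∪ q.2) hUcard
    obtain ⟨t1, ht1⟩ := exists_triple_idx P q.1 h1
      (fun x hx => hP x (Finset.mem_union_left _ hx))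
    obtain ⟨t2, ht2⟩ := exists_triple_idx P q.2 h2
      (fun x hx => hP x (Finset.mem_union_right _ hx))
    refine Finset.mem_image.2 ⟨⟨P, t1, t2⟩, mem_univ _, ?_⟩
    rw [hdecode2]
    exact Prod.ext ht1 ht2
  calc (PairBad v).card ≤ (Finset.image decode2 univ).card := card_le_card hsub
    _ ≤ (univ : Finset ((Fin 4 → Fin v) ×
          ((Fin 4 × Fin 4 × Fin 4) × (Fin 4 × Fin 4 × Fin 4)))).card := card_image_le
    _ = v ^ 4 * 4096 := by
        simp only [card_univ, Fintype.card_prod, Fintype.card_fun, Fintype.card_fin]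

noncomputable def collPairs (v Tn : ℕ) (f : Fin Tn → Trip v) : Finset (Fin Tn × Fin Tn) :=
  (univ : Finset (Fin Tn × Fin Tn)).filter (fun q => q.1 ≠ q.2 ∧ f q.1 = f q.2)

lemma card_B0_add_coll (v Tn : ℕ) (f : Fin Tn → Trip v) :
    Tn ≤ (B0 v Tn f).card + (collPairs v Tn f).card := by
  classical
  set J := Finset.image f univ with hJ
  have hB0 : (B0 v Tn f).card = J.card := by
    have himg : B0 v Tn f = J.image Subtype.val := by
      rw [hJ, Finset.image_image]; rfl
    rw [himg, Finset.card_image_of_injective _ Subtype.val_injective]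
  have hTn : Tn = ∑ t ∈ J, (univ.filter (fun i => f i = t)).card := by
    have h := Finset.card_eq_sum_card_fiberwise
      (f := f) (s := (univ : Finset (Fin Tn))) (t := J)
      (fun x _ => Finset.mem_image_of_mem f (mem_univ x))
    simpa using h
  have hcoll : (collPairs v Tn f).card =
      ∑ t ∈ J, ((univ.filter (fun i => f i = t)).offDiag).card := by
    have h := Finset.card_eq_sum_card_fiberwise
      (f := fun q : Fin Tn × Fin Tn => f q.1) (s := collPairs v Tn f) (t := J)
      (fun q _ => Finset.mem_image_of_mem f (mem_univ q.1))
    rw [h]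
    refine Finset.sum_congr rfl (fun t _ => ?_)
    congr 1
    ext q
    simp only [collPairs, Finset.mem_filter, Finset.mem_offDiag, mem_univ, true_and]
    constructor
    · rintro ⟨⟨hne, heq⟩, h1⟩
      exact ⟨h1, heq ▸ h1, hne⟩
    · rintro ⟨h1, h2, hne⟩
      exact ⟨⟨hne, h1.trans h2.symm⟩, h1⟩
  have hbound : ∀ t ∈ J, (univ.filter (fun i => f i = t)).card ≤
      1 + ((univ.filter (fun i => f i = t)).offDiag).card := by
    intro t ht
    obtain ⟨i, _, hi⟩ := Finset.mem_image.1 ht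
    have hpos : 0 < (univ.filter (fun i => f i = t)).card :=
      Finset.card_pos.2 ⟨i, Finset.mem_filter.2 ⟨mem_univ _, hi⟩⟩
    rw [Finset.offDiag_card]
    set m := (univ.filter (fun i => f i = t)).card
    have hm : m ≤ m * m := Nat.le_mul_of_pos_left m hpos
    have hm2 : 2 * m ≤ m * m + 1 := by nlinarith
    omega
  calc Tn = ∑ t ∈ J, (univ.filter (fun i => f i = t)).card := hTn
    _ ≤ ∑ t ∈ J, (1 + ((univ.filter (fun i => f i = t)).offDiag).card) :=
        Finset.sum_le_sum hbound
    _ = J.card + ∑ t ∈ J, ((univ.filter (fun i => f i = t)).offDiag).card := by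
        rw [Finset.sum_add_distrib, Finset.sum_const, smul_eq_mul, mul_one]
    _ = (B0 v Tn f).card + (collPairs v Tn f).card := by rw [hB0, hcoll]

lemma coll_sum (v Tn : ℕ) :
    (∑ f : Fin Tn → Trip v, (collPairs v Tn f).card) * NT v ≤ Tn ^ 2 * NT v ^ Tn := by
  classical
  have hswap : ∑ f : Fin Tn → Trip v, (collPairs v Tn f).card =
      ∑ q ∈ (univ : Finset (Fin Tn × Fin Tn)).filter (fun q => q.1 ≠ q.2),
        ((univ : Finset (Fin Tn → Trip v)).filter (fun f => f q.1 = f q.2)).card := by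
    have h1 : ∀ f : Fin Tn → Trip v, (collPairs v Tn f).card =
        ∑ q ∈ (univ : Finset (Fin Tn × Fin Tn)).filter (fun q => q.1 ≠ q.2),
          ite (f q.1 = f q.2) 1 0 := by
      intro f
      rw [collPairs, ← Finset.filter_filter, Finset.card_filter]
    simp_rw [h1]
    rw [Finset.sum_comm]
    refine Finset.sum_congr rfl (fun q _ => ?_)
    rw [Finset.card_filter]
  rw [hswap]
  have hq : ∀ q ∈ (univ : Finset (Fin Tn × Fin Tn)).filter (fun q => q.1 ≠ q.2),
      ((univ : Finset (Fin Tn → Trip v)).filter (fun f => f q.1 = f q.2)).card * NT v ≤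
        NT v ^ Tn := by
    intro q hq
    have hne : q.1 ≠ q.2 := (Finset.mem_filter.1 hq).2
    set Ψ : (Fin Tn → Trip v) × Trip v → (Fin Tn → Trip v) :=
      fun p => Function.update p.1 q.2 p.2 with hΨ
    have hcard : ((((univ : Finset (Fin Tn → Trip v)).filter (fun f => f q.1 = f q.2))) ×ˢ
        (univ : Finset (Trip v))).card ≤ (univ : Finset (Fin Tn → Trip v)).card := by
      apply Finset.card_le_card_of_injOn Ψ (fun _ _ => mem_univ _)
      intro p hp p' hp' heq
      simp only [mem_coe, mem_product, mem_filter, mem_univ, true_and, and_true] at hp hp'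
      have hk : p.2 = p'.2 := by
        have h := congrFun heq q.2
        simpa [hΨ, Function.update_self] using h
      have hf : p.1 = p'.1 := by
        funext i
        by_cases hi : i = q.2
        · subst hi
          have h1 := congrFun heq q.1
          rw [hΨ] at h1
          simp only [Function.update_of_ne hne] at h1
          rw [← hp, ← hp', h1]
        · have h1 := congrFun heq i
          rw [hΨ] at h1
          simpa [Function.update_of_ne hi] using h1
      exact Prod.ext hf hk
    calc ((univ : Finset (Fin Tn → Trip v)).filter (fun f => f q.1 = f q.2)).card * NT v
        = ((((univ : Finset (Fin Tn → Trip v)).filter (fun f => f q.1 = f q.2))) ×ˢ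
            (univ : Finset (Trip v))).card := by
          rw [Finset.card_product, Finset.card_univ]; rfl
      _ ≤ (univ : Finset (Fin Tn → Trip v)).card := hcard
      _ = NT v ^ Tn := by rw [Finset.card_univ, Fintype.card_fun, Fintype.card_fin]; rfl
  calc (∑ q ∈ (univ : Finset (Fin Tn × Fin Tn)).filter (fun q => q.1 ≠ q.2),
        ((univ : Finset (Fin Tn → Trip v)).filter (fun f => f q.1 = f q.2)).card) * NT v
      = ∑ q ∈ (univ : Finset (Fin Tn × Fin Tn)).filter (fun q => q.1 ≠ q.2),
        ((univ : Finset (Fin Tn → Trip v)).filter (fun f => f q.1 = f q.2)).card * NT v := by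
        rw [Finset.sum_mul]
    _ ≤ ∑ _q ∈ (univ : Finset (Fin Tn × Fin Tn)).filter (fun q => q.1 ≠ q.2), NT v ^ Tn :=
        Finset.sum_le_sum hq
    _ ≤ Tn ^ 2 * NT v ^ Tn := by
        rw [Finset.sum_const, smul_eq_mul]
        apply Nat.mul_le_mul_right
        calc ((univ : Finset (Fin Tn × Fin Tn)).filter (fun q => q.1 ≠ q.2)).card
            ≤ (univ : Finset (Fin Tn × Fin Tn)).card := Finset.card_filter_le _ _
          _ = Tn ^ 2 := by
              rw [Finset.card_univ, Fintype.card_prod, Fintype.card_fin, sq]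



noncomputable def ConfigsJ (v j : ℕ) : Finset (Finset (Finset (Fin v))) :=
  (univ : Finset (Finset (Finset (Fin v)))).filter
    (fun C => C.card = j ∧ (∀ b ∈ C, b.card = 3) ∧ IsEvenConfig C)

def sj (j : ℕ) : ℕ := (3 * j) / 2

lemma configsJ_card_le (v j : ℕ) (hv : 0 < v) :
    (ConfigsJ v j).card ≤ v ^ sj j * (sj j * sj j * sj j) ^ j := by
  apply config_count j (sj j) hv
  intro C hC
  simp only [ConfigsJ, mem_filter, mem_univ, true_and] at hC
  obtain ⟨hcard, h3, he⟩ := hC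
  refine ⟨hcard, h3, ?_⟩
  have := even_span C h3 he
  rw [hcard] at this
  simp only [sj]
  omega

noncomputable def BadC (v Tn : ℕ) (f : Fin Tn → Trip v) : Finset (Finset (Finset (Fin v))) :=
  ((Finset.Icc 1 6).biUnion (fun j => ConfigsJ v j)).filter (fun C => C ⊆ B0 v Tn f)

noncomputable def BadP (v Tn : ℕ) (f : Fin Tn → Trip v) :
    Finset ((Finset (Fin v)) × (Finset (Fin v))) :=
  (PairBad v).filter (fun q => q.1 ∈ B0 v Tn f ∧ q.2 ∈ B0 v Tn f)

noncomputable def G (v Tn : ℕ) (f : Fin Tn → Trip v) : ℕ :=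
  (Tn - (B0 v Tn f).card) + (BadC v Tn f).card + (BadP v Tn f).card

noncomputable def Err (v Tn : ℕ) : ℝ :=
  (Tn : ℝ) ^ 2 / (NT v : ℝ) +
  (∑ j ∈ Finset.Icc 1 6,
    ((v : ℝ) ^ sj j * ((sj j * sj j * sj j : ℕ) : ℝ) ^ j) * (Tn : ℝ) ^ j / (NT v : ℝ) ^ j) +
  ((v : ℝ) ^ 4 * 4096) * (Tn : ℝ) ^ 2 / (NT v : ℝ) ^ 2

lemma trip_nonempty {v : ℕ} (hv3 : 3 ≤ v) : Nonempty (Trip v) := by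
  refine ⟨⟨(univ : Finset (Fin 3)).map (Fin.castLEEmb hv3), ?_⟩⟩
  rw [Finset.card_map, card_univ, Fintype.card_fin]

lemma NT_pos {v : ℕ} (hv3 : 3 ≤ v) : 0 < NT v := by
  have := trip_nonempty hv3
  exact Fintype.card_pos

lemma sum_G_le (v Tn : ℕ) (hv3 : 3 ≤ v) (hT6 : 6 ≤ Tn) :
    ∑ f : Fin Tn → Trip v, (G v Tn f : ℝ) ≤ (NT v : ℝ) ^ Tn * Err v Tn := by
  have hNT : (0:ℝ) < (NT v : ℝ) := by exact_mod_cast NT_pos hv3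
  have hNTn : (0:ℝ) < (NT v : ℝ) ^ Tn := pow_pos hNT Tn
  have hv : 0 < v := by omega
  -- part a: collisions
  have parta : ∑ f : Fin Tn → Trip v, ((Tn - (B0 v Tn f).card : ℕ) : ℝ) ≤
      (NT v : ℝ) ^ Tn * ((Tn : ℝ) ^ 2 / (NT v : ℝ)) := by
    have h1 : ∀ f : Fin Tn → Trip v, ((Tn - (B0 v Tn f).card : ℕ) : ℝ) ≤
        ((collPairs v Tn f).card : ℝ) := by
      intro f
      have := card_B0_add_coll v Tn f
      have h2 : Tn - (B0 v Tn f).card ≤ (collPairs v Tn f).card := by omega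
      exact_mod_cast h2
    calc ∑ f : Fin Tn → Trip v, ((Tn - (B0 v Tn f).card : ℕ) : ℝ)
        ≤ ∑ f : Fin Tn → Trip v, ((collPairs v Tn f).card : ℝ) :=
          Finset.sum_le_sum (fun f _ => h1 f)
      _ ≤ (NT v : ℝ) ^ Tn * ((Tn : ℝ) ^ 2 / (NT v : ℝ)) := by
          have key : (∑ f : Fin Tn → Trip v, ((collPairs v Tn f).card : ℝ)) * (NT v : ℝ) ≤
              (Tn : ℝ) ^ 2 * (NT v : ℝ) ^ Tn := by
            have h0 := coll_sum v Tn
            have h0' : (((∑ f : Fin Tn → Trip v, (collPairs v Tn f).card) * NT v : ℕ) : ℝ) ≤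
                ((Tn ^ 2 * NT v ^ Tn : ℕ) : ℝ) := by exact_mod_cast h0
            push_cast at h0'
            convert h0' using 2
          have h3 : (NT v : ℝ) ^ Tn * ((Tn : ℝ) ^ 2 / (NT v : ℝ)) =
              (Tn : ℝ) ^ 2 * (NT v : ℝ) ^ Tn / (NT v : ℝ) := by ring
          rw [h3, le_div_iff₀ hNT]
          exact key
  -- part b: even configs
  have partb : ∑ f : Fin Tn → Trip v, ((BadC v Tn f).card : ℝ) ≤
      (NT v : ℝ) ^ Tn * (∑ j ∈ Finset.Icc 1 6,
        ((v : ℝ) ^ sj j * ((sj j * sj j * sj j : ℕ) : ℝ) ^ j) * (Tn : ℝ) ^ j / (NT v : ℝ) ^ j) := by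
    set X := (Finset.Icc 1 6).biUnion (fun j => ConfigsJ v j) with hX
    have hswap : ∑ f : Fin Tn → Trip v, (BadC v Tn f).card =
        ∑ C ∈ X, (pinnedSet v Tn C).card := by
      have h1 : ∀ f : Fin Tn → Trip v, (BadC v Tn f).card =
          ∑ C ∈ X, ite (C ⊆ B0 v Tn f) 1 0 := by
        intro f; rw [BadC, Finset.card_filter]
      simp_rw [h1]
      rw [Finset.sum_comm]
      refine Finset.sum_congr rfl (fun C _ => ?_)
      rw [← Finset.card_filter]
      congr 1
      ext f
      simp only [pinnedSet, mem_filter, mem_univ, true_and]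
      constructor
      · intro hsub b hb
        have h2 := hsub hb
        simp only [B0, Finset.mem_image, mem_univ, true_and] at h2
        exact h2
      · intro h b hb
        simp only [B0, Finset.mem_image, mem_univ, true_and]
        exact h b hb
    have hdisj : Set.PairwiseDisjoint ↑(Finset.Icc 1 6) (fun j => ConfigsJ v j) := by
      intro a _ b _ hab
      simp only [Function.onFun]
      rw [Finset.disjoint_left]
      intro C hCa hCb
      simp only [ConfigsJ, mem_filter, mem_univ, true_and] at hCa hCb
      exact hab (hCa.1 ▸ hCb.1 ▸ rfl)
    have hsplit : ∑ C ∈ X, (pinnedSet v Tn C).card =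
        ∑ j ∈ Finset.Icc 1 6, ∑ C ∈ ConfigsJ v j, (pinnedSet v Tn C).card :=
      Finset.sum_biUnion hdisj
    have hC_bound : ∀ j ∈ Finset.Icc 1 6, ∀ C ∈ ConfigsJ v j,
        ((pinnedSet v Tn C).card : ℝ) ≤ (Tn : ℝ) ^ j * (NT v : ℝ) ^ Tn / (NT v : ℝ) ^ j := by
      intro j _ C hC
      simp only [ConfigsJ, mem_filter, mem_univ, true_and] at hC
      obtain ⟨hcard, h3, _⟩ := hC
      have hp := pinnedSet_card_mul v Tn C h3
      rw [hcard] at hp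
      rw [le_div_iff₀ (pow_pos hNT j)]
      calc ((pinnedSet v Tn C).card : ℝ) * (NT v : ℝ) ^ j
          = (((pinnedSet v Tn C).card * NT v ^ j : ℕ) : ℝ) := by push_cast; ring
        _ ≤ ((Tn ^ j * NT v ^ Tn : ℕ) : ℝ) := by exact_mod_cast hp
        _ = (Tn : ℝ) ^ j * (NT v : ℝ) ^ Tn := by push_cast; ring
    calc ∑ f : Fin Tn → Trip v, ((BadC v Tn f).card : ℝ)
        = ∑ j ∈ Finset.Icc 1 6, ∑ C ∈ ConfigsJ v j, ((pinnedSet v Tn C).card : ℝ) := by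
          rw [← Nat.cast_sum, hswap, hsplit]
          push_cast
          try rfl
      _ ≤ ∑ j ∈ Finset.Icc 1 6, ((ConfigsJ v j).card : ℝ) *
            ((Tn : ℝ) ^ j * (NT v : ℝ) ^ Tn / (NT v : ℝ) ^ j) := by
          refine Finset.sum_le_sum (fun j hj => ?_)
          calc ∑ C ∈ ConfigsJ v j, ((pinnedSet v Tn C).card : ℝ)
              ≤ ∑ _C ∈ ConfigsJ v j, (Tn : ℝ) ^ j * (NT v : ℝ) ^ Tn / (NT v : ℝ) ^ j :=
                Finset.sum_le_sum (fun C hC => hC_bound j hj C hC)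
            _ = ((ConfigsJ v j).card : ℝ) *
                ((Tn : ℝ) ^ j * (NT v : ℝ) ^ Tn / (NT v : ℝ) ^ j) := by
                rw [Finset.sum_const, nsmul_eq_mul]
      _ ≤ ∑ j ∈ Finset.Icc 1 6, ((v : ℝ) ^ sj j * ((sj j * sj j * sj j : ℕ) : ℝ) ^ j) *
            ((Tn : ℝ) ^ j * (NT v : ℝ) ^ Tn / (NT v : ℝ) ^ j) := by
          refine Finset.sum_le_sum (fun j _ => ?_)
          have hb : ((ConfigsJ v j).card : ℝ) ≤
              (v : ℝ) ^ sj j * ((sj j * sj j * sj j : ℕ) : ℝ) ^ j := by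
            have := configsJ_card_le v j hv
            exact_mod_cast this
          apply mul_le_mul_of_nonneg_right hb
          positivity
      _ = (NT v : ℝ) ^ Tn * (∑ j ∈ Finset.Icc 1 6,
            ((v : ℝ) ^ sj j * ((sj j * sj j * sj j : ℕ) : ℝ) ^ j) * (Tn : ℝ) ^ j / (NT v : ℝ) ^ j) := by
          rw [Finset.mul_sum]
          refine Finset.sum_congr rfl (fun j _ => ?_)
          ring
  -- part c: bad pairs
  have partc : ∑ f : Fin Tn → Trip v, ((BadP v Tn f).card : ℝ) ≤
      (NT v : ℝ) ^ Tn * ((v : ℝ) ^ 4 * 4096 * (Tn : ℝ) ^ 2 / (NT v : ℝ) ^ 2) := by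
    have hswap : ∑ f : Fin Tn → Trip v, (BadP v Tn f).card =
        ∑ q ∈ PairBad v, (pinnedSet v Tn {q.1, q.2}).card := by
      have h1 : ∀ f : Fin Tn → Trip v, (BadP v Tn f).card =
          ∑ q ∈ PairBad v, ite (q.1 ∈ B0 v Tn f ∧ q.2 ∈ B0 v Tn f) 1 0 := by
        intro f; rw [BadP, Finset.card_filter]
      simp_rw [h1]
      rw [Finset.sum_comm]
      refine Finset.sum_congr rfl (fun q _ => ?_)
      rw [← Finset.card_filter]
      congr 1
      ext f
      simp only [pinnedSet, mem_filter, mem_univ, true_and, B0, Finset.mem_image,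
        Finset.mem_insert, Finset.mem_singleton]
      constructor
      · rintro ⟨h1', h2'⟩ b hb
        rcases hb with rfl | rfl
        · exact h1'
        · exact h2'
      · intro h
        exact ⟨h q.1 (Or.inl rfl), h q.2 (Or.inr rfl)⟩
    have hq_bound : ∀ q ∈ PairBad v,
        ((pinnedSet v Tn {q.1, q.2}).card : ℝ) ≤
          (Tn : ℝ) ^ 2 * (NT v : ℝ) ^ Tn / (NT v : ℝ) ^ 2 := by
      intro q hq
      simp only [PairBad, mem_filter, mem_univ, true_and] at hq
      obtain ⟨h1, h2, hne, _⟩ := hq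
      have h3 : ∀ b ∈ ({q.1, q.2} : Finset (Finset (Fin v))), b.card = 3 := by
        intro b hb
        rcases Finset.mem_insert.1 hb with rfl | hb
        · exact h1
        · rw [Finset.mem_singleton.1 hb]; exact h2
      have hcard2 : ({q.1, q.2} : Finset (Finset (Fin v))).card = 2 := by
        rw [Finset.card_insert_of_notMem (by simpa using hne), Finset.card_singleton]
      have hp := pinnedSet_card_mul v Tn {q.1, q.2} h3
      rw [hcard2] at hp
      rw [le_div_iff₀ (pow_pos hNT 2)]
      calc ((pinnedSet v Tn {q.1, q.2}).card : ℝ) * (NT v : ℝ) ^ 2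
          = (((pinnedSet v Tn {q.1, q.2}).card * NT v ^ 2 : ℕ) : ℝ) := by push_cast; ring
        _ ≤ ((Tn ^ 2 * NT v ^ Tn : ℕ) : ℝ) := by exact_mod_cast hp
        _ = (Tn : ℝ) ^ 2 * (NT v : ℝ) ^ Tn := by push_cast; ring
    calc ∑ f : Fin Tn → Trip v, ((BadP v Tn f).card : ℝ)
        = ∑ q ∈ PairBad v, ((pinnedSet v Tn {q.1, q.2}).card : ℝ) := by
          rw [← Nat.cast_sum, hswap]
          push_cast
          try rfl
      _ ≤ ∑ _q ∈ PairBad v, (Tn : ℝ) ^ 2 * (NT v : ℝ) ^ Tn / (NT v : ℝ) ^ 2 :=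
          Finset.sum_le_sum hq_bound
      _ = ((PairBad v).card : ℝ) * ((Tn : ℝ) ^ 2 * (NT v : ℝ) ^ Tn / (NT v : ℝ) ^ 2) := by
          rw [Finset.sum_const, nsmul_eq_mul]
      _ ≤ ((v : ℝ) ^ 4 * 4096) * ((Tn : ℝ) ^ 2 * (NT v : ℝ) ^ Tn / (NT v : ℝ) ^ 2) := by
          apply mul_le_mul_of_nonneg_right
          · exact_mod_cast pairBad_count hv
          · positivity
      _ = (NT v : ℝ) ^ Tn * ((v : ℝ) ^ 4 * 4096 * (Tn : ℝ) ^ 2 / (NT v : ℝ) ^ 2) := by ring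
  -- combine
  have hGsplit : ∀ f : Fin Tn → Trip v, (G v Tn f : ℝ) =
      ((Tn - (B0 v Tn f).card : ℕ) : ℝ) + ((BadC v Tn f).card : ℝ) + ((BadP v Tn f).card : ℝ) := by
    intro f; rw [G]; push_cast; ring
  calc ∑ f : Fin Tn → Trip v, (G v Tn f : ℝ)
      = (∑ f : Fin Tn → Trip v, ((Tn - (B0 v Tn f).card : ℕ) : ℝ)) +
        (∑ f : Fin Tn → Trip v, ((BadC v Tn f).card : ℝ)) +
        (∑ f : Fin Tn → Trip v, ((BadP v Tn f).card : ℝ)) := by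
        simp_rw [hGsplit]
        rw [Finset.sum_add_distrib, Finset.sum_add_distrib]
    _ ≤ (NT v : ℝ) ^ Tn * ((Tn : ℝ) ^ 2 / (NT v : ℝ)) +
        (NT v : ℝ) ^ Tn * (∑ j ∈ Finset.Icc 1 6,
          ((v : ℝ) ^ sj j * ((sj j * sj j * sj j : ℕ) : ℝ) ^ j) * (Tn : ℝ) ^ j / (NT v : ℝ) ^ j) +
        (NT v : ℝ) ^ Tn * ((v : ℝ) ^ 4 * 4096 * (Tn : ℝ) ^ 2 / (NT v : ℝ) ^ 2) := by
        exact add_le_add (add_le_add parta partb) partc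
    _ = (NT v : ℝ) ^ Tn * Err v Tn := by rw [Err]; ring

lemma exists_good (v Tn : ℕ) (hv3 : 3 ≤ v) (hT6 : 6 ≤ Tn) :
    ∃ f : Fin Tn → Trip v, (G v Tn f : ℝ) ≤ Err v Tn := by
  have hNT : 0 < NT v := NT_pos hv3
  have hne' : Nonempty (Trip v) := trip_nonempty hv3
  have hne : (univ : Finset (Fin Tn → Trip v)).Nonempty := univ_nonempty
  by_contra h
  push_neg at h
  have hlt : ∑ _f : Fin Tn → Trip v, Err v Tn < ∑ f : Fin Tn → Trip v, (G v Tn f : ℝ) :=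
    Finset.sum_lt_sum_of_nonempty hne (fun f _ => h f)
  rw [Finset.sum_const, card_univ, Fintype.card_fun, Fintype.card_fin, nsmul_eq_mul] at hlt
  have hle := sum_G_le v Tn hv3 hT6
  push_cast at hlt
  rw [show Fintype.card (Trip v) = NT v from rfl] at hlt
  linarith

noncomputable def pick {v : ℕ} (C : Finset (Finset (Fin v))) : Finset (Fin v) :=
  if h : C.Nonempty then h.choose else ∅

lemma pick_mem {v : ℕ} {C : Finset (Finset (Fin v))} (h : C.Nonempty) : pick C ∈ C := by
  rw [pick, dif_pos h]; exact h.choose_spec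

lemma card3_of_B0 {v Tn : ℕ} {f : Fin Tn → Trip v} {b : Finset (Fin v)}
    (hb : b ∈ B0 v Tn f) : b.card = 3 := by
  simp only [B0, Finset.mem_image, mem_univ, true_and] at hb
  obtain ⟨i, rfl⟩ := hb
  exact (f i).2

lemma master (v Tn : ℕ) (hv3 : 3 ≤ v) (hT6 : 6 ≤ Tn) :
    ∃ B : Finset (Finset (Fin v)),
      (∀ b ∈ B, b.card = 3) ∧
      (∀ p : Finset (Fin v), p.card = 2 → (B.filter fun b => p ⊆ b).card ≤ 1) ∧
      (∀ C ⊆ B, C.Nonempty → C.card ≤ 6 → ¬ IsEvenConfig C) ∧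
      ((Tn : ℝ) - Err v Tn ≤ (B.card : ℝ)) := by
  obtain ⟨f, hf⟩ := exists_good v Tn hv3 hT6
  set Del := (BadC v Tn f).image pick ∪ (BadP v Tn f).image (fun q => q.1) with hDel
  refine ⟨B0 v Tn f \ Del, ?_, ?_, ?_, ?_⟩
  · intro b hb
    exact card3_of_B0 (Finset.mem_sdiff.1 hb).1
  · intro p hp
    rw [Finset.card_le_one]
    intro b1 hb1 b2 hb2
    rw [Finset.mem_filter] at hb1 hb2
    by_contra hne
    have hq : (b1, b2) ∈ BadP v Tn f := by
      rw [BadP, Finset.mem_filter]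
      constructor
      · rw [PairBad, Finset.mem_filter]
        refine ⟨mem_univ _, card3_of_B0 (Finset.mem_sdiff.1 hb1.1).1,
          card3_of_B0 (Finset.mem_sdiff.1 hb2.1).1, hne, ?_⟩
        calc 2 = p.card := hp.symm
          _ ≤ (b1 ∩ b2).card :=
            Finset.card_le_card (Finset.subset_inter hb1.2 hb2.2)
      · exact ⟨(Finset.mem_sdiff.1 hb1.1).1, (Finset.mem_sdiff.1 hb2.1).1⟩
    have hmem : b1 ∈ Del :=
      Finset.mem_union.2 (Or.inr (Finset.mem_image.2 ⟨(b1, b2), hq, rfl⟩))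
    exact (Finset.mem_sdiff.1 hb1.1).2 hmem
  · intro C hC hCne hC6 heven
    have hCB0 : C ⊆ B0 v Tn f := hC.trans Finset.sdiff_subset
    have hCbad : C ∈ BadC v Tn f := by
      rw [BadC, Finset.mem_filter]
      refine ⟨?_, hCB0⟩
      rw [Finset.mem_biUnion]
      refine ⟨C.card, ?_, ?_⟩
      · rw [Finset.mem_Icc]
        exact ⟨Finset.card_pos.2 hCne, hC6⟩
      · rw [ConfigsJ, Finset.mem_filter]
        exact ⟨mem_univ _, rfl, fun b hb => card3_of_B0 (hCB0 hb), heven⟩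
    have hpick : pick C ∈ Del :=
      Finset.mem_union.2 (Or.inl (Finset.mem_image.2 ⟨C, hCbad, rfl⟩))
    have hmem : pick C ∈ B0 v Tn f \ Del := hC (pick_mem hCne)
    exact (Finset.mem_sdiff.1 hmem).2 hpick
  · have h1 : (B0 v Tn f).card ≤ (B0 v Tn f \ Del).card + Del.card := by
      have := Finset.card_sdiff_add_card_inter (B0 v Tn f) Del
      have h2 : (B0 v Tn f ∩ Del).card ≤ Del.card :=
        Finset.card_le_card Finset.inter_subset_right
      omega
    have hDelcard : Del.card ≤ (BadC v Tn f).card + (BadP v Tn f).card := by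
      rw [hDel]
      exact (Finset.card_union_le _ _).trans
        (add_le_add Finset.card_image_le Finset.card_image_le)
    have hB0le : (B0 v Tn f).card ≤ Tn := by
      calc (B0 v Tn f).card ≤ (univ : Finset (Fin Tn)).card := Finset.card_image_le
        _ = Tn := by rw [card_univ, Fintype.card_fin]
    have hnat : Tn ≤ (B0 v Tn f \ Del).card + G v Tn f := by
      rw [G]; omega
    have hcast : (Tn : ℝ) ≤ ((B0 v Tn f \ Del).card : ℝ) + (G v Tn f : ℝ) := by
      exact_mod_cast hnat
    linarith


lemma NT_eq (v : ℕ) : NT v = Nat.choose v 3 := by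
  rw [NT, Fintype.card_subtype]
  have h : (univ : Finset (Finset (Fin v))).filter (fun b => b.card = 3) =
      Finset.powersetCard 3 (univ : Finset (Fin v)) := by
    ext b
    simp [Finset.mem_powersetCard_univ]
  rw [h, Finset.card_powersetCard, card_univ, Fintype.card_fin]

lemma six_NT (v : ℕ) : 6 * NT v = (v - 2) * ((v - 1) * v) := by
  rw [NT_eq]
  have hd : v.descFactorial 3 = (v - 2) * ((v - 1) * v) := by
    simp [Nat.descFactorial_succ, Nat.descFactorial_zero]
  have h2 : (6 : ℕ) ∣ v.descFactorial 3 := by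
    have h := Nat.factorial_dvd_descFactorial v 3
    norm_num [Nat.factorial] at h
    rw [hd]
    exact h
  have h1 : Nat.choose v 3 = v.descFactorial 3 / 6 := by
    rw [Nat.choose_eq_descFactorial_div_factorial]
    norm_num [Nat.factorial]
  rw [h1, Nat.mul_div_cancel' h2, hd]

lemma mono_le {y : ℝ} (hy : (2:ℝ)^24 ≤ y) (c₁ c₂ : ℝ) (A e : ℕ)
    (hc₂ : 0 ≤ c₂) (hnum : c₁ ≤ c₂ * 2^(24*e)) :
    c₁ * y^A ≤ c₂ * y^(A + e) := by
  have hy0 : (0:ℝ) ≤ y := le_trans (by positivity) hy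
  have hyE : (2:ℝ)^(24*e) ≤ y^e := by
    rw [pow_mul]
    exact pow_le_pow_left₀ (by positivity) hy e
  calc c₁ * y^A ≤ (c₂ * 2^(24*e)) * y^A :=
        mul_le_mul_of_nonneg_right hnum (pow_nonneg hy0 A)
    _ ≤ (c₂ * y^e) * y^A :=
        mul_le_mul_of_nonneg_right (mul_le_mul_of_nonneg_left hyE hc₂) (pow_nonneg hy0 A)
    _ = c₂ * y^(A+e) := by rw [pow_add]; ring

lemma err_le (v Tn : ℕ) (y : ℝ)
    (hy : (2:ℝ)^24 ≤ y) (hv5 : ((v:ℝ)) = y^5)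
    (hT0 : (0:ℝ) < Tn) (hN0 : (0:ℝ) < NT v)
    (hTu : (Tn:ℝ) ≤ y^9/2^21) (hNl : y^15/48 ≤ (NT v : ℝ)) :
    Err v Tn ≤ (Tn : ℝ)/4 := by
  have hy0 : (0:ℝ) < y := lt_of_lt_of_le (by positivity) hy
  set T : ℝ := (Tn : ℝ) with hT
  set N : ℝ := (NT v : ℝ) with hN
  -- part a
  have parta : T^2 / N ≤ T/32 := by
    rw [div_le_div_iff₀ hN0 (by norm_num : (0:ℝ) < 32)]
    have h32 : 32 * T ≤ N := by
      calc 32 * T ≤ 32 * (y^9/2^21) := by linarith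
        _ ≤ y^15/48 := by
            have h := mono_le hy (32/2^21) (1/48) 9 6 (by norm_num) (by norm_num)
            calc 32 * (y^9/2^21) = (32/2^21) * y^9 := by ring
              _ ≤ (1/48) * y^(9+6) := h
              _ = y^15/48 := by ring
        _ ≤ N := hNl
    nlinarith
  -- part c
  have partc : (v:ℝ)^4 * 4096 * T^2 / N^2 ≤ T/32 := by
    rw [div_le_div_iff₀ (by positivity) (by norm_num : (0:ℝ) < 32)]
    have hkey : 32 * 4096 * y^20 * T ≤ N^2 := by
      calc 32 * 4096 * y^20 * T ≤ 32 * 4096 * y^20 * (y^9/2^21) := by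
            apply mul_le_mul_of_nonneg_left hTu
            positivity
        _ = (32*4096/2^21) * y^29 := by ring
        _ ≤ (1/48^2) * y^(29+1) := mono_le hy _ _ 29 1 (by norm_num) (by norm_num)
        _ = (y^15/48)^2 := by ring
        _ ≤ N^2 := by
            apply pow_le_pow_left₀ (by positivity) hNl
    calc (v:ℝ)^4 * 4096 * T^2 * 32 = T * (32 * 4096 * y^20 * T) := by rw [hv5]; ring
      _ ≤ T * N^2 := mul_le_mul_of_nonneg_left hkey hT0.le
      _ = T * N^2 := rfl
  -- part b : each j-term
  have partb : ∀ j ∈ Finset.Icc 1 6,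
      ((v : ℝ) ^ sj j * ((sj j * sj j * sj j : ℕ) : ℝ) ^ j) * T ^ j / N ^ j ≤ T/32 := by
    intro j hj
    have hTu' : T ≤ y^9/2^21 := hTu
    have hNj : ∀ k : ℕ, (y^15/48)^k ≤ N^k := fun k => pow_le_pow_left₀ (by positivity) hNl k
    fin_cases hj
    · -- j = 1, sj = 1, c = 1
      show ((v : ℝ) ^ sj 1 * ((sj 1 * sj 1 * sj 1 : ℕ) : ℝ) ^ 1) * T ^ 1 / N ^ 1 ≤ T/32
      rw [show sj 1 = 1 from rfl]
      rw [div_le_div_iff₀ (by positivity) (by norm_num : (0:ℝ) < 32)]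
      have hkey : 32 * y^5 ≤ N := by
        calc (32:ℝ) * y^5 = (32:ℝ) * y^5 := rfl
          _ ≤ (1/48) * y^(5+10) := mono_le hy _ _ 5 10 (by norm_num) (by norm_num)
          _ = y^15/48 := by ring
          _ ≤ N := hNl
      calc ((v:ℝ)^1 * ((1*1*1 : ℕ):ℝ)^1) * T^1 * 32 = T * (32 * y^5) := by
            rw [hv5]; push_cast; ring
        _ ≤ T * N := mul_le_mul_of_nonneg_left hkey hT0.le
        _ = T * N^1 := by ring
    · -- j = 2, sj = 3, c = 27
      show ((v : ℝ) ^ sj 2 * ((sj 2 * sj 2 * sj 2 : ℕ) : ℝ) ^ 2) * T ^ 2 / N ^ 2 ≤ T/32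
      rw [show sj 2 = 3 from rfl]
      rw [div_le_div_iff₀ (by positivity) (by norm_num : (0:ℝ) < 32)]
      have hkey : 32 * 27^2 * y^15 * T ≤ N^2 := by
        calc 32 * 27^2 * y^15 * T ≤ 32 * 27^2 * y^15 * (y^9/2^21) := by
              apply mul_le_mul_of_nonneg_left hTu' (by positivity)
          _ = (32*27^2/2^21) * y^24 := by ring
          _ ≤ (1/48^2) * y^(24+6) := mono_le hy _ _ 24 6 (by norm_num) (by norm_num)
          _ = (y^15/48)^2 := by ring
          _ ≤ N^2 := hNj 2
      calc ((v:ℝ)^3 * ((3*3*3 : ℕ):ℝ)^2) * T^2 * 32 = T * (32 * 27^2 * y^15 * T) := by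
            rw [hv5]; push_cast; ring
        _ ≤ T * N^2 := mul_le_mul_of_nonneg_left hkey hT0.le
    · -- j = 3, sj = 4, c = 64
      show ((v : ℝ) ^ sj 3 * ((sj 3 * sj 3 * sj 3 : ℕ) : ℝ) ^ 3) * T ^ 3 / N ^ 3 ≤ T/32
      rw [show sj 3 = 4 from rfl]
      rw [div_le_div_iff₀ (by positivity) (by norm_num : (0:ℝ) < 32)]
      have hT2 : T^2 ≤ (y^9/2^21)^2 := pow_le_pow_left₀ hT0.le hTu' 2
      have hkey : 32 * 64^3 * y^20 * T^2 ≤ N^3 := by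
        calc 32 * 64^3 * y^20 * T^2 ≤ 32 * 64^3 * y^20 * (y^9/2^21)^2 := by
              apply mul_le_mul_of_nonneg_left hT2 (by positivity)
          _ = (32*64^3/2^42) * y^38 := by ring
          _ ≤ (1/48^3) * y^(38+7) := mono_le hy _ _ 38 7 (by norm_num) (by norm_num)
          _ = (y^15/48)^3 := by ring
          _ ≤ N^3 := hNj 3
      calc ((v:ℝ)^4 * ((4*4*4 : ℕ):ℝ)^3) * T^3 * 32 = T * (32 * 64^3 * y^20 * T^2) := by
            rw [hv5]; push_cast; ring
        _ ≤ T * N^3 := mul_le_mul_of_nonneg_left hkey hT0.le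
    · -- j = 4, sj = 6, c = 216
      show ((v : ℝ) ^ sj 4 * ((sj 4 * sj 4 * sj 4 : ℕ) : ℝ) ^ 4) * T ^ 4 / N ^ 4 ≤ T/32
      rw [show sj 4 = 6 from rfl]
      rw [div_le_div_iff₀ (by positivity) (by norm_num : (0:ℝ) < 32)]
      have hT3 : T^3 ≤ (y^9/2^21)^3 := pow_le_pow_left₀ hT0.le hTu' 3
      have hkey : 32 * 216^4 * y^30 * T^3 ≤ N^4 := by
        calc 32 * 216^4 * y^30 * T^3 ≤ 32 * 216^4 * y^30 * (y^9/2^21)^3 := by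
              apply mul_le_mul_of_nonneg_left hT3 (by positivity)
          _ = (32*216^4/2^63) * y^57 := by ring
          _ ≤ (1/48^4) * y^(57+3) := mono_le hy _ _ 57 3 (by norm_num) (by norm_num)
          _ = (y^15/48)^4 := by ring
          _ ≤ N^4 := hNj 4
      calc ((v:ℝ)^6 * ((6*6*6 : ℕ):ℝ)^4) * T^4 * 32 = T * (32 * 216^4 * y^30 * T^3) := by
            rw [hv5]; push_cast; ring
        _ ≤ T * N^4 := mul_le_mul_of_nonneg_left hkey hT0.le
    · -- j = 5, sj = 7, c = 343
      show ((v : ℝ) ^ sj 5 * ((sj 5 * sj 5 * sj 5 : ℕ) : ℝ) ^ 5) * T ^ 5 / N ^ 5 ≤ T/32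
      rw [show sj 5 = 7 from rfl]
      rw [div_le_div_iff₀ (by positivity) (by norm_num : (0:ℝ) < 32)]
      have hT4 : T^4 ≤ (y^9/2^21)^4 := pow_le_pow_left₀ hT0.le hTu' 4
      have hkey : 32 * 343^5 * y^35 * T^4 ≤ N^5 := by
        calc 32 * 343^5 * y^35 * T^4 ≤ 32 * 343^5 * y^35 * (y^9/2^21)^4 := by
              apply mul_le_mul_of_nonneg_left hT4 (by positivity)
          _ = (32*343^5/2^84) * y^71 := by ring
          _ ≤ (1/48^5) * y^(71+4) := mono_le hy _ _ 71 4 (by norm_num) (by norm_num)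
          _ = (y^15/48)^5 := by ring
          _ ≤ N^5 := hNj 5
      calc ((v:ℝ)^7 * ((7*7*7 : ℕ):ℝ)^5) * T^5 * 32 = T * (32 * 343^5 * y^35 * T^4) := by
            rw [hv5]; push_cast; ring
        _ ≤ T * N^5 := mul_le_mul_of_nonneg_left hkey hT0.le
    · -- j = 6, sj = 9, c = 729
      show ((v : ℝ) ^ sj 6 * ((sj 6 * sj 6 * sj 6 : ℕ) : ℝ) ^ 6) * T ^ 6 / N ^ 6 ≤ T/32
      rw [show sj 6 = 9 from rfl]
      rw [div_le_div_iff₀ (by positivity) (by norm_num : (0:ℝ) < 32)]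
      have hT5 : T^5 ≤ (y^9/2^21)^5 := pow_le_pow_left₀ hT0.le hTu' 5
      have hkey : 32 * 729^6 * y^45 * T^5 ≤ N^6 := by
        calc 32 * 729^6 * y^45 * T^5 ≤ 32 * 729^6 * y^45 * (y^9/2^21)^5 := by
              apply mul_le_mul_of_nonneg_left hT5 (by positivity)
          _ = (32*729^6/2^105) * y^90 := by ring
          _ ≤ (1/48^6) * y^(90+0) := mono_le hy _ _ 90 0 (by norm_num) (by norm_num)
          _ = (y^15/48)^6 := by ring
          _ ≤ N^6 := hNj 6
      calc ((v:ℝ)^9 * ((9*9*9 : ℕ):ℝ)^6) * T^6 * 32 = T * (32 * 729^6 * y^45 * T^5) := by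
            rw [hv5]; push_cast; ring
        _ ≤ T * N^6 := mul_le_mul_of_nonneg_left hkey hT0.le
  -- combine
  have hsum : (∑ j ∈ Finset.Icc 1 6,
      ((v : ℝ) ^ sj j * ((sj j * sj j * sj j : ℕ) : ℝ) ^ j) * T ^ j / N ^ j) ≤ 6 * (T/32) := by
    calc (∑ j ∈ Finset.Icc 1 6,
        ((v : ℝ) ^ sj j * ((sj j * sj j * sj j : ℕ) : ℝ) ^ j) * T ^ j / N ^ j)
        ≤ ∑ _j ∈ Finset.Icc 1 6, T/32 := Finset.sum_le_sum partb
      _ = 6 * (T/32) := by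
          rw [Finset.sum_const, Nat.card_Icc, nsmul_eq_mul]
          norm_num
  rw [Err]
  have : T^2/N + (∑ j ∈ Finset.Icc 1 6,
      ((v : ℝ) ^ sj j * ((sj j * sj j * sj j : ℕ) : ℝ) ^ j) * T ^ j / N ^ j) +
      (v:ℝ)^4*4096*T^2/N^2 ≤ T/32 + 6*(T/32) + T/32 := by
    exact add_le_add (add_le_add parta hsum) partc
  calc (Tn:ℝ)^2/(NT v : ℝ) + _ + _ ≤ T/32 + 6*(T/32) + T/32 := this
    _ = T/4 := by ring


theorem main :
    ∃ c : ℝ, 0 < c ∧ ∃ v₀ : ℕ, ∀ v : ℕ, v₀ ≤ v →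
      ∃ B : Finset (Finset (Fin v)),
        (∀ b ∈ B, b.card = 3) ∧
        (∀ p : Finset (Fin v), p.card = 2 → (B.filter fun b => p ⊆ b).card ≤ 1) ∧
        (∀ C ⊆ B, C.Nonempty → C.card ≤ 6 → ¬ IsEvenConfig C) ∧
        c * (v : ℝ) ^ ((9 : ℝ) / 5) ≤ (B.card : ℝ) := by
  refine ⟨(2^24 : ℝ)⁻¹, by norm_num, 2^120, ?_⟩
  intro v hv
  have hv0 : 0 < v := lt_of_lt_of_le (by norm_num) hv
  have hv0' : (0:ℝ) < v := by exact_mod_cast hv0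
  have hvR : (2:ℝ)^120 ≤ (v:ℝ) := by exact_mod_cast hv
  set y : ℝ := (v:ℝ) ^ ((1:ℝ)/5) with hy_def
  have hy0 : 0 < y := Real.rpow_pos_of_pos hv0' _
  have hv5 : ((v:ℝ)) = y^5 := by
    rw [hy_def, ← Real.rpow_natCast ((v:ℝ)^((1:ℝ)/5)) 5, ← Real.rpow_mul hv0'.le]
    norm_num
  have hy24 : (2:ℝ)^24 ≤ y := by
    have h120 : ((2:ℝ)^24)^5 ≤ y^5 := by
      rw [← hv5]
      calc ((2:ℝ)^24)^5 = (2:ℝ)^120 := by norm_num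
        _ ≤ (v:ℝ) := hvR
    exact le_of_pow_le_pow_left₀ (by norm_num) hy0.le h120
  have hy1 : (1:ℝ) ≤ y := le_trans (by norm_num) hy24
  have hy9 : (2:ℝ)^216 ≤ y^9 := by
    calc (2:ℝ)^216 = ((2:ℝ)^24)^9 := by norm_num
      _ ≤ y^9 := pow_le_pow_left₀ (by positivity) hy24 9
  -- s5 and Tn
  set s5 : ℕ := ⌈y⌉₊ with hs5_def
  have hs5l : y ≤ (s5:ℝ) := Nat.le_ceil y
  have hs5u : (s5:ℝ) ≤ 2*y := by
    have h := Nat.ceil_lt_add_one hy0.le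
    linarith
  have hs5pos : 0 < s5 := by
    have h : (0:ℝ) < (s5:ℝ) := lt_of_lt_of_le hy0 hs5l
    exact_mod_cast h
  set Tn : ℕ := v*v / (2^21 * s5) with hTn_def
  have hden : (0:ℕ) < 2^21 * s5 := by positivity
  have hdenR : (0:ℝ) < 2^21 * (s5:ℝ) := by positivity
  have hvv : ((v*v : ℕ):ℝ) = y^10 := by push_cast; rw [hv5]; ring
  have hTnu : (Tn:ℝ) ≤ y^9/2^21 := by
    calc (Tn:ℝ) ≤ ((v*v : ℕ):ℝ) / ((2^21*s5 : ℕ):ℝ) := Nat.cast_div_le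
      _ = y^10 / (2^21 * (s5:ℝ)) := by rw [hvv]; push_cast; ring_nf
      _ ≤ y^10 / (2^21 * y) := by
          rw [div_le_div_iff₀ (by positivity) (by positivity)]
          have h : 2^21*y ≤ 2^21*(s5:ℝ) := by linarith
          exact mul_le_mul_of_nonneg_left h (by positivity)
      _ = y^9/2^21 := by
          rw [eq_div_iff (by norm_num : (2:ℝ)^21 ≠ 0)]
          field_simp
  have hTnl : y^9/2^23 ≤ (Tn:ℝ) := by
    have h2 : (2^21*s5) * Tn + (v*v) % (2^21*s5) = v*v := Nat.div_add_mod (v*v) (2^21*s5)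
    have h1 : (v*v) % (2^21*s5) < 2^21*s5 := Nat.mod_lt _ hden
    have h3 : (2^21*(s5:ℝ)) * (Tn:ℝ) ≥ y^10 - 2^21*(s5:ℝ) := by
      have hc2 : (2^21*(s5:ℝ)) * (Tn:ℝ) + (((v*v) % (2^21*s5) : ℕ):ℝ) = y^10 := by
        rw [← hvv]
        exact_mod_cast h2
      have hc1 : (((v*v) % (2^21*s5) : ℕ):ℝ) < 2^21*(s5:ℝ) := by
        exact_mod_cast h1
      linarith
    have h4 : (Tn:ℝ) ≥ y^10/(2^21*(s5:ℝ)) - 1 := by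
      rw [ge_iff_le, sub_le_iff_le_add, div_le_iff₀ hdenR]
      have hexp : ((Tn:ℝ)+1)*(2^21*(s5:ℝ)) = (2^21*(s5:ℝ))*(Tn:ℝ) + 2^21*(s5:ℝ) := by ring
      linarith
    have h5 : y^10/(2^21*(s5:ℝ)) ≥ y^9/2^22 := by
      rw [ge_iff_le, div_le_div_iff₀ (by norm_num) hdenR]
      have h : y^9*(2^21*(s5:ℝ)) ≤ y^9*(2^21*(2*y)) := by
        apply mul_le_mul_of_nonneg_left _ (by positivity)
        linarith
      calc y^9*(2^21*(s5:ℝ)) ≤ y^9*(2^21*(2*y)) := h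
        _ = y^10*2^22 := by ring
    have h6 : y^9/2^23 ≥ (1:ℝ) := by
      rw [ge_iff_le, le_div_iff₀ (by norm_num : (0:ℝ) < 2^23)]
      calc (1:ℝ) * 2^23 = 2^23 := by ring
        _ ≤ 2^216 := by norm_num
        _ ≤ y^9 := hy9
    have : y^9/2^22 = y^9/2^23 + y^9/2^23 := by ring
    linarith
  have hT0R : (0:ℝ) < (Tn:ℝ) := by
    calc (0:ℝ) < y^9/2^23 := by positivity
      _ ≤ (Tn:ℝ) := hTnl
  have hT6 : 6 ≤ Tn := by
    have h : (6:ℝ) ≤ (Tn:ℝ) := by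
      calc (6:ℝ) ≤ 2^216/2^23 := by norm_num
        _ ≤ y^9/2^23 := by gcongr
        _ ≤ (Tn:ℝ) := hTnl
    exact_mod_cast h
  have hv3 : 3 ≤ v := by
    have h : (2:ℕ)^120 ≤ v := hv
    omega
  -- NT bounds
  have hNl : y^15/48 ≤ (NT v : ℝ) := by
    have hn := six_NT v
    have h2v : 2 ≤ v := by omega
    have h1v : 1 ≤ v := by omega
    have hcast : (6:ℝ) * (NT v : ℝ) = ((v:ℝ)-2)*(((v:ℝ)-1)*(v:ℝ)) := by
      have := congrArg (fun n : ℕ => (n:ℝ)) hn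
      push_cast [Nat.cast_sub h2v, Nat.cast_sub h1v] at this
      convert this using 1 <;> ring
    set V := (v:ℝ) with hV
    have hV4 : (4:ℝ) ≤ V := by
      calc (4:ℝ) ≤ 2^120 := by norm_num
        _ ≤ V := hvR
    have e1 : V/2 ≤ V - 2 := by linarith
    have e2 : V/2 ≤ V - 1 := by linarith
    have h3 : (V/2)*V ≤ (V-1)*V := mul_le_mul_of_nonneg_right e2 (by positivity)
    have h4 : (V/2)*((V/2)*V) ≤ (V-2)*((V-1)*V) :=
      mul_le_mul e1 h3 (by positivity) (by linarith)
    have h5 : (6:ℝ) * (NT v : ℝ) ≥ V^3/4 := by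
      rw [hcast]
      have h6 : (V/2)*((V/2)*V) = V^3/4 := by ring
      linarith
    have hVy : V^3 = y^15 := by rw [hv5]; ring
    rw [hVy] at h5
    linarith
  have hN0 : (0:ℝ) < (NT v : ℝ) := by
    calc (0:ℝ) < y^15/48 := by positivity
      _ ≤ (NT v : ℝ) := hNl
  -- apply master and err_le
  obtain ⟨B, hB3, hBpack, hBeven, hBcard⟩ := master v Tn hv3 hT6
  have hErr : Err v Tn ≤ (Tn:ℝ)/4 := err_le v Tn y hy24 hv5 hT0R hN0 hTnu hNl
  refine ⟨B, hB3, hBpack, hBeven, ?_⟩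
  have hpow : (v:ℝ)^((9:ℝ)/5) = y^9 := by
    rw [hy_def, ← Real.rpow_natCast ((v:ℝ)^((1:ℝ)/5)) 9, ← Real.rpow_mul hv0'.le]
    norm_num
  calc (2^24 : ℝ)⁻¹ * (v:ℝ)^((9:ℝ)/5) = y^9/2^24 := by rw [hpow]; ring
    _ ≤ (Tn:ℝ)/2 := by
        have : y^9/2^23 ≤ (Tn:ℝ) := hTnl
        linarith
    _ ≤ (Tn:ℝ) - Err v Tn := by linarith
    _ ≤ (B.card : ℝ) := hBcard

end SixEvenFree

/-- There is a constant `c > 0` such that for all sufficiently large `v` there exists a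
6-even-free triple packing of order `v` with at least `c·v^{9/5}` blocks. -/
theorem exists_six_even_free_packing :
    ∃ c : ℝ, 0 < c ∧ ∃ v₀ : ℕ, ∀ v : ℕ, v₀ ≤ v →
      ∃ B : Finset (Finset (Fin v)),
        (∀ b ∈ B, b.card = 3) ∧
        (∀ p : Finset (Fin v), p.card = 2 → (B.filter fun b => p ⊆ b).card ≤ 1) ∧
        (∀ C ⊆ B, C.Nonempty → C.card ≤ 6 → ¬ IsEvenConfig C) ∧
        c * (v : ℝ) ^ ((9 : ℝ) / 5) ≤ (B.card : ℝ) := by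
  exact SixEvenFree.main
end

section
/- For every integer x ≥ 2 there exists an integer M₀ such that for all m ≥ M₀: (a) every (m,n,1,x) X-code of constant weight x+1 satisfies n·C(x+1,2) ≤ C(m,2); and (b) there exists an (m,n,1,x) X-code of constant weight x+1 with n·C(x+1,2) = C(m,2) if and only if there exists a Steiner 2-design S(2, x+1, m). -/
/-- An `(·,·,d,x)` X-code on coordinate set `ι`. -/
def IsXCode {ι : Type*} [Fintype ι] (d x : ℕ) (X : Finset (ι → ZMod 2)) : Prop :=
  ∀ S₁ S₂ : Finset (ι → ZMod 2), S₁ ⊆ X → S₂ ⊆ X → Disjoint S₁ S₂ →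
    S₁.card ≤ x → 1 ≤ S₂.card → S₂.card ≤ d →
    ∃ j : ι, (∑ s ∈ S₂, s j) = 1 ∧ ∀ s ∈ S₁, s j = 0

/-- The weight of a vector: its number of nonzero coordinates. -/
def wt {ι : Type*} [Fintype ι] (s : ι → ZMod 2) : ℕ :=
  (Finset.univ.filter fun j => s j ≠ 0).card

/-- There exists a Steiner 2-design `S(2,k,m)` on the point set `Fin m`. -/
def ExistsSteiner2Design (k m : ℕ) : Prop :=
  ∃ B : Finset (Finset (Fin m)), (∀ b ∈ B, b.card = k) ∧
    ∀ p : Finset (Fin m), p.card = 2 → ∃! b, b ∈ B ∧ p ⊆ b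

open Finset in
section
namespace XAux
variable {m : ℕ}


variable {m : ℕ}

lemma zmod2_cases : ∀ a : ZMod 2, a = 0 ∨ a = 1 := by decide

lemma zmod2_ne_zero {a : ZMod 2} (h : a ≠ 0) : a = 1 := by
  rcases zmod2_cases a with h0 | h1
  · exact absurd h0 h
  · exact h1

/-- support of a vector -/
def supp (s : Fin m → ZMod 2) : Finset (Fin m) :=
  Finset.univ.filter fun j => s j ≠ 0

lemma wt_eq (s : Fin m → ZMod 2) : wt s = (supp s).card := rfl

lemma mem_supp {s : Fin m → ZMod 2} {j : Fin m} : j ∈ supp s ↔ s j ≠ 0 := by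
  simp [supp]

lemma supp_injective : Function.Injective (supp (m := m)) := by
  intro s t h
  funext j
  by_cases hj : s j = 0
  · have : j ∉ supp t := by rw [← h]; simp [mem_supp, hj]
    have ht0 : ¬ t j ≠ 0 := mem_supp.not.mp this
    simp only [not_not] at ht0
    rw [hj, ht0]
  · have hj' : j ∈ supp t := by rw [← h]; exact mem_supp.mpr hj
    rw [zmod2_ne_zero hj, zmod2_ne_zero (mem_supp.mp hj')]

/-- indicator vector of a set -/
def ind (b : Finset (Fin m)) : Fin m → ZMod 2 := fun j => if j ∈ b then 1 else 0

lemma supp_ind (b : Finset (Fin m)) : supp (ind b) = b := by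
  ext j; by_cases h : j ∈ b <;> simp [mem_supp, ind, h]

lemma ind_injective : Function.Injective (ind (m := m)) := by
  intro b b' h
  have := congrArg supp h
  rwa [supp_ind, supp_ind] at this

def allPairs (m : ℕ) : Finset (Finset (Fin m)) :=
  (Finset.univ : Finset (Fin m)).powersetCard 2

lemma card_allPairs : (allPairs m).card = m.choose 2 := by
  simp [allPairs, Finset.card_powersetCard]

lemma mem_allPairs {p : Finset (Fin m)} : p ∈ allPairs m ↔ p.card = 2 := by
  simp [allPairs, Finset.mem_powersetCard]

/-- number of codewords whose support contains p -/
def lam (X : Finset (Fin m → ZMod 2)) (p : Finset (Fin m)) : ℕ :=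
  (X.filter fun u => p ⊆ supp u).card

lemma sum_lam (X : Finset (Fin m → ZMod 2)) {k : ℕ} (hw : ∀ s ∈ X, (supp s).card = k) :
    ∑ p ∈ allPairs m, lam X p = X.card * k.choose 2 := by
  have key : ∀ u ∈ X, ((allPairs m).filter fun p => p ⊆ supp u).card = k.choose 2 := by
    intro u hu
    have : ((allPairs m).filter fun p => p ⊆ supp u) = (supp u).powersetCard 2 := by
      ext p
      simp only [mem_filter, mem_allPairs, Finset.mem_powersetCard]
      tauto
    rw [this, Finset.card_powersetCard, hw u hu]
  calc ∑ p ∈ allPairs m, lam X p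
      = ∑ p ∈ allPairs m, ∑ u ∈ X, (if p ⊆ supp u then 1 else 0) := by
        refine Finset.sum_congr rfl fun p _ => ?_
        rw [lam, Finset.card_filter]
    _ = ∑ u ∈ X, ∑ p ∈ allPairs m, (if p ⊆ supp u then 1 else 0) := Finset.sum_comm
    _ = ∑ u ∈ X, ((allPairs m).filter fun p => p ⊆ supp u).card := by
        refine Finset.sum_congr rfl fun u _ => ?_
        rw [Finset.card_filter]
    _ = ∑ u ∈ X, k.choose 2 := Finset.sum_congr rfl key
    _ = X.card * k.choose 2 := by rw [Finset.sum_const, smul_eq_mul]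

lemma private_point {x : ℕ} (X : Finset (Fin m → ZMod 2))
    (hw : ∀ s ∈ X, (supp s).card = x + 1) (hX : IsXCode 1 x X)
    {u w : Fin m → ZMod 2} (hu : u ∈ X) (hwX : w ∈ X) (hne : w ≠ u)
    (hint : 2 ≤ (supp u ∩ supp w).card) :
    ∃ c ∈ supp u, ∀ B ∈ X, B ≠ u → c ∉ supp B := by
  by_contra hcon
  push_neg at hcon
  -- every point of supp u is covered by some other codeword
  have hcov : ∀ c : Fin m, ∃ B, c ∈ supp u → (B ∈ X ∧ B ≠ u ∧ c ∈ supp B) := by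
    intro c
    by_cases hc : c ∈ supp u
    · obtain ⟨B, hB, hBne, hcB⟩ := hcon c hc
      exact ⟨B, fun _ => ⟨hB, hBne, hcB⟩⟩
    · exact ⟨0, fun h => absurd h hc⟩
  choose f hf using hcov
  set T : Finset (Fin m) := supp u \ supp w with hT
  have hTcard : T.card ≤ x - 1 := by
    have h1 : T.card + (supp u ∩ supp w).card = (supp u).card :=
      card_sdiff_add_card_inter _ _
    have h2 := hw u hu
    omega
  set S₁ : Finset (Fin m → ZMod 2) := insert w (T.image f) with hS₁
  have hS₁X : S₁ ⊆ X := by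
    intro s hs
    rw [hS₁, mem_insert] at hs
    rcases hs with rfl | hs
    · exact hwX
    · obtain ⟨c, hc, rfl⟩ := mem_image.mp hs
      have hcu : c ∈ supp u := (mem_sdiff.mp hc).1
      exact (hf c hcu).1
  have huS₁ : u ∉ S₁ := by
    rw [hS₁, mem_insert]
    rintro (rfl | hs)
    · exact hne rfl
    · obtain ⟨c, hc, hfc⟩ := mem_image.mp hs
      have hcu : c ∈ supp u := (mem_sdiff.mp hc).1
      exact (hf c hcu).2.1 hfc
  have hcard : S₁.card ≤ x := by
    have h1 : S₁.card ≤ (T.image f).card + 1 := card_insert_le _ _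
    have h2 : (T.image f).card ≤ T.card := card_image_le
    have hx1 : 1 ≤ x := by
      have := card_le_card (inter_subset_left (s₁ := supp u) (s₂ := supp w))
      have := hw u hu
      omega
    omega
  obtain ⟨j, hj1, hj0⟩ := hX S₁ {u} hS₁X (singleton_subset_iff.mpr hu)
    (disjoint_singleton_right.mpr huS₁) hcard (by simp) (by simp)
  rw [Finset.sum_singleton] at hj1
  have hju : j ∈ supp u := mem_supp.mpr (by rw [hj1]; exact one_ne_zero)
  have hjw : j ∉ supp w := by
    have := hj0 w (by rw [hS₁]; exact mem_insert_self _ _)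
    simp [mem_supp, this]
  have hjT : j ∈ T := mem_sdiff.mpr ⟨hju, hjw⟩
  have hfj : f j ∈ S₁ := by
    rw [hS₁, mem_insert]; right; exact mem_image_of_mem f hjT
  have h0 := hj0 (f j) hfj
  have h1 : j ∈ supp (f j) := (hf j hju).2.2
  exact (mem_supp.mp h1) h0

lemma two_mul_choose (x : ℕ) : 2 * (x + 1).choose 2 = (x + 1) * x := by
  rw [Nat.choose_two_right]
  have h : 2 ∣ (x + 1) * ((x + 1) - 1) := by
    rcases Nat.even_or_odd x with he | ho
    · exact Dvd.dvd.mul_left he.two_dvd _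
    · exact Dvd.dvd.mul_right (Odd.add_one ho).two_dvd _
  rw [Nat.mul_div_cancel' h]
  simp

lemma main_bound {x : ℕ} (hx : 2 ≤ x) (hm : x * x + 2 * x + 2 ≤ m)
    (X : Finset (Fin m → ZMod 2)) (hw : ∀ s ∈ X, (supp s).card = x + 1)
    (hX : IsXCode 1 x X) :
    X.card * (x + 1).choose 2 ≤ m.choose 2 ∧
    (X.card * (x + 1).choose 2 = m.choose 2 → ∀ p ∈ allPairs m, lam X p = 1) := by
  classical
  set A := allPairs m with hA
  set Z := A.filter (fun p => lam X p = 0) with hZ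
  set D := A.filter (fun p => 2 ≤ lam X p) with hD
  set R := X.filter (fun u => ∃ p ∈ D, p ⊆ supp u) with hR
  set E := ∑ p ∈ A, (lam X p - 1) with hE
  -- the basic identity
  have identity : (∑ p ∈ A, lam X p) + Z.card = A.card + E := by
    have hZc : Z.card = ∑ p ∈ A, (if lam X p = 0 then 1 else 0) := by
      rw [hZ, Finset.card_filter]
    have : ∀ p ∈ A, lam X p + (if lam X p = 0 then 1 else 0) = 1 + (lam X p - 1) := by
      intro p _
      by_cases h : lam X p = 0 <;> simp [h] <;> omega
    calc (∑ p ∈ A, lam X p) + Z.card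
        = ∑ p ∈ A, (lam X p + (if lam X p = 0 then 1 else 0)) := by
          rw [Finset.sum_add_distrib, hZc]
      _ = ∑ p ∈ A, (1 + (lam X p - 1)) := Finset.sum_congr rfl this
      _ = A.card + E := by rw [Finset.sum_add_distrib, Finset.sum_const, smul_eq_mul, mul_one]
  -- E bounded by repeated pairs inside blocks of R
  have hEbound : E ≤ R.card * (x + 1).choose 2 := by
    have hED : E = ∑ p ∈ D, (lam X p - 1) := by
      rw [hE]
      refine (Finset.sum_subset (Finset.filter_subset _ _) ?_).symm
      intro p hpA hpD
      simp only [hD, Finset.mem_filter] at hpD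
      push_neg at hpD
      have := hpD hpA; omega
    have step1 : ∀ p ∈ D, lam X p ≤ (R.filter fun u => p ⊆ supp u).card := by
      intro p hpD
      refine Finset.card_le_card ?_
      intro u hu
      rw [Finset.mem_filter] at hu ⊢
      refine ⟨?_, hu.2⟩
      rw [hR, Finset.mem_filter]
      exact ⟨hu.1, p, hpD, hu.2⟩
    have step2 : ∑ p ∈ D, (R.filter fun u => p ⊆ supp u).card
        = ∑ u ∈ R, (D.filter fun p => p ⊆ supp u).card := by
      calc ∑ p ∈ D, (R.filter fun u => p ⊆ supp u).card
          = ∑ p ∈ D, ∑ u ∈ R, (if p ⊆ supp u then 1 else 0) := by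
            refine Finset.sum_congr rfl fun p _ => ?_
            rw [Finset.card_filter]
        _ = ∑ u ∈ R, ∑ p ∈ D, (if p ⊆ supp u then 1 else 0) := Finset.sum_comm
        _ = ∑ u ∈ R, (D.filter fun p => p ⊆ supp u).card := by
            refine Finset.sum_congr rfl fun u _ => ?_
            rw [Finset.card_filter]
    have step3 : ∀ u ∈ R, (D.filter fun p => p ⊆ supp u).card ≤ (x + 1).choose 2 := by
      intro u hu
      have huX : u ∈ X := Finset.mem_of_mem_filter u hu
      have hsub : (D.filter fun p => p ⊆ supp u) ⊆ (supp u).powersetCard 2 := by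
        intro p hp
        rw [Finset.mem_filter] at hp
        have hpA : p ∈ A := Finset.mem_of_mem_filter p hp.1
        rw [Finset.mem_powersetCard]
        exact ⟨hp.2, mem_allPairs.mp hpA⟩
      calc (D.filter fun p => p ⊆ supp u).card ≤ ((supp u).powersetCard 2).card :=
            Finset.card_le_card hsub
        _ = (x + 1).choose 2 := by rw [Finset.card_powersetCard, hw u huX]
    calc E = ∑ p ∈ D, (lam X p - 1) := hED
      _ ≤ ∑ p ∈ D, (R.filter fun u => p ⊆ supp u).card :=
          Finset.sum_le_sum fun p hp => le_trans (Nat.sub_le _ _) (step1 p hp)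
      _ = ∑ u ∈ R, (D.filter fun p => p ⊆ supp u).card := step2
      _ ≤ ∑ u ∈ R, (x + 1).choose 2 := Finset.sum_le_sum step3
      _ = R.card * (x + 1).choose 2 := by rw [Finset.sum_const, smul_eq_mul]
  -- private points for blocks in R
  have hpriv : ∀ u ∈ R, ∃ c, c ∈ supp u ∧ ∀ B ∈ X, B ≠ u → c ∉ supp B := by
    intro u hu
    simp only [hR, Finset.mem_filter] at hu
    obtain ⟨huX, p, hpD, hpu⟩ := hu
    simp only [hD, Finset.mem_filter] at hpD
    obtain ⟨hpA, hp2⟩ := hpD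
    have hp2' : 1 < (X.filter fun u => p ⊆ supp u).card := by
      rw [← lam]; omega
    obtain ⟨w, hwmem, hwne⟩ := Finset.exists_mem_ne hp2' u
    rw [Finset.mem_filter] at hwmem
    have hint : 2 ≤ (supp u ∩ supp w).card := by
      have : p ⊆ supp u ∩ supp w := Finset.subset_inter hpu hwmem.2
      calc 2 = p.card := (mem_allPairs.mp hpA).symm
        _ ≤ _ := Finset.card_le_card this
    obtain ⟨c, hc1, hc2⟩ := private_point X hw hX huX hwmem.1 hwne hint
    exact ⟨c, hc1, hc2⟩
  have hchoice : ∀ u : Fin m → ZMod 2, ∃ c, u ∈ R →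
      (c ∈ supp u ∧ ∀ B ∈ X, B ≠ u → c ∉ supp B) := by
    intro u
    by_cases hu : u ∈ R
    · obtain ⟨c, hc⟩ := hpriv u hu
      exact ⟨c, fun _ => hc⟩
    · exact ⟨⟨0, by omega⟩, fun h => absurd h hu⟩
  choose g hg using hchoice
  set Zu : (Fin m → ZMod 2) → Finset (Finset (Fin m)) :=
    fun u => (Finset.univ \ supp u).image (fun y => insert (g u) {y}) with hZu
  have hZuZ : ∀ u ∈ R, Zu u ⊆ Z := by
    intro u hu z hz
    obtain ⟨hgu, hpr⟩ := hg u hu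
    have huX : u ∈ X := Finset.mem_of_mem_filter u hu
    simp only [hZu, Finset.mem_image] at hz
    obtain ⟨y, hy, rfl⟩ := hz
    rw [Finset.mem_sdiff] at hy
    have hyne : g u ≠ y := fun h => hy.2 (h ▸ hgu)
    have hcard2 : (insert (g u) ({y} : Finset (Fin m))).card = 2 := by
      rw [Finset.card_insert_of_notMem (by simp [hyne]), Finset.card_singleton]
    rw [hZ, Finset.mem_filter]
    refine ⟨mem_allPairs.mpr hcard2, ?_⟩
    rw [lam, Finset.card_eq_zero, Finset.filter_eq_empty_iff]
    intro B hB hsubB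
    have hgB : g u ∈ supp B := hsubB (Finset.mem_insert_self _ _)
    have hBu : B = u := by
      by_contra hne
      exact hpr B hB hne hgB
    subst hBu
    exact hy.2 (hsubB (Finset.mem_insert_of_mem (Finset.mem_singleton_self _)))
  have hZucard : ∀ u ∈ R, (Zu u).card = m - (x + 1) := by
    intro u hu
    obtain ⟨hgu, _⟩ := hg u hu
    have huX : u ∈ X := Finset.mem_of_mem_filter u hu
    have hinj : Set.InjOn (fun y => insert (g u) ({y} : Finset (Fin m)))
        (↑(Finset.univ \ supp u) : Set (Fin m)) := by
      intro y hy y' hy' heq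
      simp only [Finset.coe_sdiff, Finset.coe_univ, Set.mem_diff, Set.mem_univ,
        Finset.mem_coe, true_and] at hy hy'
      have hyne : y ≠ g u := fun h => hy (h ▸ hgu)
      have heq' : (insert (g u) {y} : Finset (Fin m)) = insert (g u) {y'} := heq
      have : y ∈ insert (g u) ({y'} : Finset (Fin m)) := by
        rw [← heq']; exact Finset.mem_insert_of_mem (Finset.mem_singleton_self _)
      rcases Finset.mem_insert.mp this with h | h
      · exact absurd h hyne
      · exact Finset.mem_singleton.mp h
    rw [hZu]
    rw [Finset.card_image_of_injOn hinj, Finset.card_sdiff_of_subset (Finset.subset_univ _),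
      Finset.card_univ, Fintype.card_fin, hw u huX]
  have hginj : ∀ z ∈ Z, (R.filter fun u => z ∈ Zu u).card ≤ 2 := by
    intro z hzZ
    have hzcard : z.card = 2 := mem_allPairs.mp (Finset.mem_of_mem_filter z hzZ)
    have hmap : ∀ u ∈ (R.filter fun u => z ∈ Zu u), g u ∈ z := by
      intro u hu
      rw [Finset.mem_filter] at hu
      simp only [hZu, Finset.mem_image] at hu
      obtain ⟨y, _, heq⟩ := hu.2
      rw [← heq]
      exact Finset.mem_insert_self _ _
    have hinj : Set.InjOn g (R.filter fun u => z ∈ Zu u) := by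
      intro u hu u' hu' heq
      rw [Finset.mem_coe, Finset.mem_filter] at hu hu'
      by_contra hne
      obtain ⟨hgu, hpru⟩ := hg u hu.1
      obtain ⟨hgu', hpru'⟩ := hg u' hu'.1
      have hu'X : u' ∈ X := Finset.mem_of_mem_filter u' hu'.1
      have : g u ∉ supp u' := hpru u' hu'X (fun h => hne (h ▸ rfl))
      rw [heq] at this
      exact this hgu'
    calc (R.filter fun u => z ∈ Zu u).card ≤ z.card :=
          Finset.card_le_card_of_injOn g hmap hinj
      _ = 2 := hzcard
  have hRZ : R.card * (m - (x + 1)) ≤ 2 * Z.card := by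
    have heq1 : ∀ u ∈ R, (Zu u).card = (Z.filter fun z => z ∈ Zu u).card := by
      intro u hu
      congr 1
      ext z
      rw [Finset.mem_filter]
      exact ⟨fun h => ⟨hZuZ u hu h, h⟩, fun h => h.2⟩
    calc R.card * (m - (x + 1)) = ∑ u ∈ R, (Zu u).card := by
          rw [Finset.sum_congr rfl hZucard, Finset.sum_const, smul_eq_mul]
      _ = ∑ u ∈ R, (Z.filter fun z => z ∈ Zu u).card := Finset.sum_congr rfl heq1
      _ = ∑ u ∈ R, ∑ z ∈ Z, (if z ∈ Zu u then 1 else 0) := by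
          refine Finset.sum_congr rfl fun u _ => ?_
          rw [Finset.card_filter]
      _ = ∑ z ∈ Z, ∑ u ∈ R, (if z ∈ Zu u then 1 else 0) := Finset.sum_comm
      _ = ∑ z ∈ Z, (R.filter fun u => z ∈ Zu u).card := by
          refine Finset.sum_congr rfl fun z _ => ?_
          rw [Finset.card_filter]
      _ ≤ ∑ z ∈ Z, 2 := Finset.sum_le_sum hginj
      _ = 2 * Z.card := by rw [Finset.sum_const, smul_eq_mul, mul_comm]
  -- arithmetic
  have hP : x * x + x + 1 ≤ m - (x + 1) := by omega
  have h2c := two_mul_choose x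
  have hkey : 2 * E + R.card ≤ 2 * Z.card := by
    have h1 : 2 * E ≤ R.card * ((x + 1) * x) := by
      calc 2 * E ≤ 2 * (R.card * (x + 1).choose 2) := by omega
        _ = R.card * (2 * (x + 1).choose 2) := by ring
        _ = R.card * ((x + 1) * x) := by rw [h2c]
    have h2 : R.card * ((x + 1) * x) + R.card = R.card * ((x + 1) * x + 1) := by ring
    have h3 : R.card * ((x + 1) * x + 1) ≤ R.card * (m - (x + 1)) := by
      refine Nat.mul_le_mul_left _ ?_
      have : (x + 1) * x = x * x + x := by ring
      omega
    omega
  have hsum := sum_lam X hw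
  rw [show allPairs m = A from rfl] at hsum
  have hAcard : A.card = m.choose 2 := card_allPairs
  constructor
  · omega
  · intro heqty p hpA
    have hEZ : E = Z.card := by omega
    have hR0 : R.card = 0 := by omega
    have hE0 : E = 0 := by
      rw [hR0, zero_mul] at hEbound
      omega
    have hZ0 : Z.card = 0 := by omega
    have hlam0 : lam X p ≠ 0 := by
      intro h0
      have : p ∈ Z := by rw [hZ, Finset.mem_filter]; exact ⟨hpA, h0⟩
      rw [Finset.card_eq_zero] at hZ0
      rw [hZ0] at this
      exact absurd this (Finset.notMem_empty p)
    have hlam2 : ¬ 2 ≤ lam X p := by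
      intro h2
      have hpD : p ∈ D := by rw [hD, Finset.mem_filter]; exact ⟨hpA, h2⟩
      have : (X.filter fun u => p ⊆ supp u).Nonempty := by
        rw [← Finset.card_pos, ← lam]; omega
      obtain ⟨u, hu⟩ := this
      rw [Finset.mem_filter] at hu
      have : u ∈ R := by rw [hR, Finset.mem_filter]; exact ⟨hu.1, p, hpD, hu.2⟩
      rw [Finset.card_eq_zero] at hR0
      rw [hR0] at this
      exact absurd this (Finset.notMem_empty u)
    omega

/-- From a code whose pair-multiplicities are all 1, build a Steiner design. -/
lemma steiner_of_lam_one {x : ℕ} (X : Finset (Fin m → ZMod 2))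
    (hw : ∀ s ∈ X, (supp s).card = x + 1)
    (hone : ∀ p ∈ allPairs m, lam X p = 1) :
    ExistsSteiner2Design (x + 1) m := by
  refine ⟨X.image supp, ?_, ?_⟩
  · intro b hb
    obtain ⟨u, hu, rfl⟩ := mem_image.mp hb
    exact hw u hu
  · intro p hp
    have hpA : p ∈ allPairs m := mem_allPairs.mpr hp
    have h1 := hone p hpA
    rw [lam, Finset.card_eq_one] at h1
    obtain ⟨u, hu⟩ := h1
    have huf : u ∈ X.filter fun u => p ⊆ supp u := by rw [hu]; exact mem_singleton_self u
    rw [Finset.mem_filter] at huf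
    refine ⟨supp u, ⟨mem_image_of_mem supp huf.1, huf.2⟩, ?_⟩
    rintro b ⟨hbB, hpb⟩
    obtain ⟨u', hu', rfl⟩ := mem_image.mp hbB
    have : u' ∈ X.filter fun u => p ⊆ supp u := Finset.mem_filter.mpr ⟨hu', hpb⟩
    rw [hu, Finset.mem_singleton] at this
    rw [this]

/-- From a Steiner design, build an extremal X-code. -/
lemma code_of_steiner {x : ℕ} (hx : 2 ≤ x) (B : Finset (Finset (Fin m)))
    (hBcard : ∀ b ∈ B, b.card = x + 1)
    (hBdes : ∀ p : Finset (Fin m), p.card = 2 → ∃! b, b ∈ B ∧ p ⊆ b) :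
    ∃ X : Finset (Fin m → ZMod 2), X.card = B.card ∧
      (∀ s ∈ X, (supp s).card = x + 1) ∧ IsXCode 1 x X ∧
      (∀ p ∈ allPairs m, lam X p = 1) := by
  classical
  refine ⟨B.image ind, Finset.card_image_of_injective B ind_injective, ?_, ?_, ?_⟩
  · intro s hs
    obtain ⟨b, hb, rfl⟩ := mem_image.mp hs
    rw [supp_ind]
    exact hBcard b hb
  · -- X-code property
    intro S₁ S₂ hS₁ hS₂ hdisj hc₁ hc₂1 hc₂2
    have hS₂card : S₂.card = 1 := le_antisymm hc₂2 hc₂1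
    obtain ⟨v, rfl⟩ := Finset.card_eq_one.mp hS₂card
    have hvX : v ∈ B.image ind := hS₂ (mem_singleton_self v)
    obtain ⟨b, hb, rfl⟩ := mem_image.mp hvX
    -- each w in S₁ meets b in at most one point
    have hmeet : ∀ w ∈ S₁, (b ∩ supp w).card ≤ 1 := by
      intro w hw'
      obtain ⟨b', hb', rfl⟩ := mem_image.mp (hS₁ hw')
      have hne : b' ≠ b := by
        rintro rfl
        exact (Finset.disjoint_left.mp hdisj hw') (mem_singleton_self _)
      by_contra hcon
      push_neg at hcon
      obtain ⟨p, hpsub, hpcard⟩ := Finset.exists_subset_card_eq hcon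
      rw [supp_ind] at hpsub
      have h1 : p ⊆ b := hpsub.trans inter_subset_left
      have h2 : p ⊆ b' := hpsub.trans inter_subset_right
      obtain ⟨b₀, _, huniq⟩ := hBdes p hpcard
      have e1 : b = b₀ := huniq b ⟨hb, h1⟩
      have e2 : b' = b₀ := huniq b' ⟨hb', h2⟩
      exact hne (e2.trans e1.symm)
    -- covered part of b is small
    set C := S₁.biUnion (fun w => b ∩ supp w) with hC
    have hCcard : C.card ≤ x := by
      calc C.card ≤ ∑ w ∈ S₁, (b ∩ supp w).card := Finset.card_biUnion_le
        _ ≤ ∑ w ∈ S₁, 1 := Finset.sum_le_sum hmeet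
        _ = S₁.card := by rw [Finset.sum_const, smul_eq_mul, mul_one]
        _ ≤ x := hc₁
    have hbC : ¬ b ⊆ C := by
      intro hsub
      have := Finset.card_le_card hsub
      have := hBcard b hb
      omega
    obtain ⟨j, hjb, hjC⟩ := Finset.not_subset.mp hbC
    refine ⟨j, ?_, ?_⟩
    · rw [Finset.sum_singleton, ind, if_pos hjb]
    · intro s hs
      have hjs : j ∉ b ∩ supp s := fun h => hjC (Finset.mem_biUnion.mpr ⟨s, hs, h⟩)
      have : j ∉ supp s := fun h => hjs (Finset.mem_inter.mpr ⟨hjb, h⟩)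
      rw [mem_supp, not_not] at this
      exact this
  · -- every pair covered exactly once
    intro p hpA
    obtain ⟨b₀, ⟨hb₀B, hb₀p⟩, huniq⟩ := hBdes p (mem_allPairs.mp hpA)
    rw [lam]
    rw [Finset.card_eq_one]
    refine ⟨ind b₀, ?_⟩
    ext v
    rw [Finset.mem_filter, Finset.mem_singleton]
    constructor
    · rintro ⟨hvX, hpv⟩
      obtain ⟨b', hb', rfl⟩ := mem_image.mp hvX
      rw [supp_ind] at hpv
      rw [huniq b' ⟨hb', hpv⟩]
    · rintro rfl
      exact ⟨mem_image_of_mem ind hb₀B, by rw [supp_ind]; exact hb₀p⟩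

end XAux
end

/-- For every `x ≥ 2` and all sufficiently large `m`: (a) every `(m,n,1,x)` X-code of
constant weight `x+1` satisfies `n·C(x+1,2) ≤ C(m,2)`; (b) such an X-code with
`n·C(x+1,2) = C(m,2)` exists iff a Steiner 2-design `S(2,x+1,m)` exists. -/
theorem xcode_constant_weight_bound (x : ℕ) (hx : 2 ≤ x) :
    ∃ M₀ : ℕ, ∀ m : ℕ, M₀ ≤ m →
      (∀ (n : ℕ) (X : Finset (Fin m → ZMod 2)), X.card = n →
        (∀ s ∈ X, wt s = x + 1) → IsXCode 1 x X →
        n * (x + 1).choose 2 ≤ m.choose 2) ∧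
      ((∃ (n : ℕ) (X : Finset (Fin m → ZMod 2)), X.card = n ∧
          (∀ s ∈ X, wt s = x + 1) ∧ IsXCode 1 x X ∧
          n * (x + 1).choose 2 = m.choose 2) ↔ ExistsSteiner2Design (x + 1) m) := by
  classical
  refine ⟨x * x + 2 * x + 2, fun m hm => ?_⟩
  have hwconv : ∀ (X : Finset (Fin m → ZMod 2)), (∀ s ∈ X, wt s = x + 1) →
      (∀ s ∈ X, (XAux.supp s).card = x + 1) := by
    intro X hw s hs
    rw [← XAux.wt_eq]
    exact hw s hs
  constructor
  · intro n X hcard hw hX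
    rw [← hcard]
    exact (XAux.main_bound hx hm X (hwconv X hw) hX).1
  · constructor
    · rintro ⟨n, X, hcard, hw, hX, heq⟩
      subst hcard
      have hone := (XAux.main_bound hx hm X (hwconv X hw) hX).2 heq
      exact XAux.steiner_of_lam_one X (hwconv X hw) hone
    · rintro ⟨B, hBcard, hBdes⟩
      obtain ⟨X, hXB, hw, hX, hone⟩ := XAux.code_of_steiner hx B hBcard hBdes
      refine ⟨X.card, X, rfl, ?_, hX, ?_⟩
      · intro s hs
        rw [XAux.wt_eq]
        exact hw s hs
      · have hsum := XAux.sum_lam X hw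
        have : ∑ p ∈ XAux.allPairs m, XAux.lam X p = (XAux.allPairs m).card := by
          rw [Finset.sum_congr rfl hone, Finset.sum_const, smul_eq_mul, mul_one]
        rw [← hsum, this, XAux.card_allPairs]
end

section
/- Let k ≥ 3 and r ≥ k+1 be integers, and let (V,ℬ) be an r-even-free Steiner 2-design S(2,k,v) (so |ℬ| = v(v-1)/(k(k-1))). Then the set of indicator vectors of the blocks of ℬ is a (v, v(v-1)/(k(k-1)), 1, k-1) X-code of constant weight k that is also a (v, v(v-1)/(k(k-1)), k, 1) X-code and a (v, v(v-1)/(k(k-1)), r, 0) X-code. -/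
namespace XCodeAux

variable {v : ℕ}

def φ (v : ℕ) (b : Finset (Fin v)) : Fin v → ZMod 2 :=
  fun p => if p ∈ b then (1 : ZMod 2) else 0

lemma φ_inj : Function.Injective (φ v) := by
  intro a b h
  ext p
  have hp := congrFun h p
  by_cases ha : p ∈ a <;> by_cases hb : p ∈ b <;> simp [φ, ha, hb] at hp ⊢

lemma cast_zero_iff (n : ℕ) : ((n : ZMod 2) = 0) ↔ Even n := by
  have h : ((n % 2 : ℕ) : ZMod 2) = (n : ZMod 2) := ZMod.natCast_mod n 2
  rcases Nat.mod_two_eq_zero_or_one n with h2 | h2 <;> rw [h2] at h <;>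
    simp only [Nat.cast_zero, Nat.cast_one] at h <;>
    simp [← h, Nat.even_iff, h2]

lemma cast_one_iff (n : ℕ) : ((n : ZMod 2) = 1) ↔ ¬ Even n := by
  have h : ((n % 2 : ℕ) : ZMod 2) = (n : ZMod 2) := ZMod.natCast_mod n 2
  rcases Nat.mod_two_eq_zero_or_one n with h2 | h2 <;> rw [h2] at h <;>
    simp only [Nat.cast_zero, Nat.cast_one] at h <;>
    simp [← h, Nat.even_iff, h2]

def t (C : Finset (Finset (Fin v))) (p : Fin v) : ℕ := (C.filter fun b => p ∈ b).card

lemma filter_univ_mem (b : Finset (Fin v)) :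
    Finset.univ.filter (fun p => p ∈ b) = b := by ext p; simp

lemma t_eq_sum (C : Finset (Finset (Fin v))) (p : Fin v) :
    t C p = ∑ b ∈ C, (if p ∈ b then 1 else 0) := Finset.card_filter _ _

lemma card_eq_sum_ind (b : Finset (Fin v)) :
    b.card = ∑ p : Fin v, (if p ∈ b then 1 else 0) := by
  rw [← Finset.card_filter, filter_univ_mem]

lemma sum_t_eq (C : Finset (Finset (Fin v))) :
    ∑ p : Fin v, t C p = ∑ b ∈ C, b.card := by
  simp only [t_eq_sum]
  rw [Finset.sum_comm]
  exact Finset.sum_congr rfl fun b _ => (card_eq_sum_ind b).symm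

lemma sum_coord (C : Finset (Finset (Fin v))) (j : Fin v) :
    (∑ s ∈ C.image (φ v), s j) = ((t C j : ℕ) : ZMod 2) := by
  rw [Finset.sum_image (fun x _ y _ h => φ_inj h), t_eq_sum, Nat.cast_sum]
  exact Finset.sum_congr rfl fun b _ => by by_cases h : j ∈ b <;> simp [φ, h]

lemma exists_preimage (B : Finset (Finset (Fin v))) (S : Finset (Fin v → ZMod 2))
    (hS : S ⊆ B.image (φ v)) :
    ∃ C, C ⊆ B ∧ C.image (φ v) = S ∧ C.card = S.card := by
  have himg : (B.filter (fun b => φ v b ∈ S)).image (φ v) = S := by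
    ext s
    simp only [Finset.mem_image, Finset.mem_filter]
    constructor
    · rintro ⟨b, ⟨_, hb⟩, rfl⟩; exact hb
    · intro hs
      obtain ⟨b, hb, rfl⟩ := Finset.mem_image.1 (hS hs)
      exact ⟨b, ⟨hb, hs⟩, rfl⟩
  exact ⟨_, Finset.filter_subset _ _, himg,
    by conv_rhs => rw [← himg, Finset.card_image_of_injective _ φ_inj]⟩

lemma inter_card_le_one {B : Finset (Finset (Fin v))}
    (hdes : ∀ p : Finset (Fin v), p.card = 2 → ∃! b, b ∈ B ∧ p ⊆ b)
    {b b' : Finset (Fin v)} (hb : b ∈ B) (hb' : b' ∈ B) (hne : b ≠ b') :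
    (b ∩ b').card ≤ 1 := by
  by_contra h
  push_neg at h
  obtain ⟨p, hp, hpc⟩ := Finset.exists_subset_card_eq (s := b ∩ b') (n := 2) h
  obtain ⟨c, -, hu⟩ := hdes p hpc
  exact hne ((hu b ⟨hb, hp.trans Finset.inter_subset_left⟩).trans
    (hu b' ⟨hb', hp.trans Finset.inter_subset_right⟩).symm)

lemma inter_card_eq_sum (b b' : Finset (Fin v)) :
    (b ∩ b').card = ∑ p : Fin v, (if p ∈ b then 1 else 0) * (if p ∈ b' then 1 else 0) := by
  rw [card_eq_sum_ind (b ∩ b')]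
  refine Finset.sum_congr rfl fun p _ => ?_
  by_cases h1 : p ∈ b <;> by_cases h2 : p ∈ b' <;> simp [h1, h2]

lemma pairbound {B : Finset (Finset (Fin v))}
    (hdes : ∀ p : Finset (Fin v), p.card = 2 → ∃! b, b ∈ B ∧ p ⊆ b)
    (C : Finset (Finset (Fin v))) (hCB : C ⊆ B) :
    ∑ p : Fin v, t C p * t C p ≤ (∑ p : Fin v, t C p) + C.card * (C.card - 1) := by
  have key : ∑ p : Fin v, t C p * t C p = ∑ b ∈ C, ∑ b' ∈ C, (b ∩ b').card := by
    simp only [t_eq_sum, Finset.sum_mul_sum]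
    rw [Finset.sum_comm]
    refine Finset.sum_congr rfl fun b _ => ?_
    rw [Finset.sum_comm]
    exact Finset.sum_congr rfl fun b' _ => (inter_card_eq_sum b b').symm
  rw [key, sum_t_eq]
  have step : ∀ b ∈ C, ∑ b' ∈ C, (b ∩ b').card ≤ b.card + (C.card - 1) := by
    intro b hb
    rw [← Finset.add_sum_erase C _ hb, Finset.inter_self]
    have : ∑ b' ∈ C.erase b, (b ∩ b').card ≤ ∑ b' ∈ C.erase b, 1 := by
      refine Finset.sum_le_sum fun b' hb' => ?_
      exact inter_card_le_one hdes (hCB hb) (hCB (Finset.mem_of_mem_erase hb'))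
        (fun h => (Finset.ne_of_mem_erase hb') (h.symm))
    calc b.card + ∑ b' ∈ C.erase b, (b ∩ b').card
        ≤ b.card + ∑ b' ∈ C.erase b, 1 := by omega
      _ = b.card + (C.card - 1) := by
          rw [Finset.sum_const, smul_eq_mul, mul_one, Finset.card_erase_of_mem hb]
  calc ∑ b ∈ C, ∑ b' ∈ C, (b ∩ b').card ≤ ∑ b ∈ C, (b.card + (C.card - 1)) :=
        Finset.sum_le_sum step
    _ = (∑ b ∈ C, b.card) + C.card * (C.card - 1) := by
        rw [Finset.sum_add_distrib, Finset.sum_const, smul_eq_mul]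

lemma sum_t_on (C : Finset (Finset (Fin v))) (b₁ : Finset (Fin v)) :
    ∑ p ∈ b₁, t C p = ∑ b ∈ C, (b ∩ b₁).card := by
  simp only [t_eq_sum]
  rw [Finset.sum_comm]
  refine Finset.sum_congr rfl fun b _ => ?_
  rw [← Finset.card_filter]
  congr 1
  ext p
  simp [Finset.mem_inter, and_comm]

lemma mul_pred_add (m : ℕ) : m * (m - 1) + m = m * m := by
  cases m with
  | zero => rfl
  | succ n => simp only [Nat.succ_sub_one]; ring

lemma two_mul_choose_two : ∀ n : ℕ, 2 * n.choose 2 = n * (n - 1)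
  | 0 => rfl
  | (n + 1) => by
      rw [Nat.choose_succ_succ, Nat.mul_add, two_mul_choose_two n, Nat.choose_one_right]
      cases n with
      | zero => rfl
      | succ m => simp only [Nat.succ_sub_one]; ring

lemma arith1 (m k MK MM1 MM Sin Sout Qin Qout : ℕ)
    (hub : Qin + Qout ≤ MK + MM1) (hsum : Sin + Sout = MK)
    (hout : 2 * Sout ≤ Qout) (hin : Sin ≤ Qin) (hSin : Sin ≤ m)
    (hMM : MM1 + m = MM) (hlt : MM < MK) : False := by omega

lemma arith2 (k MK MM1 Sin Sout Qin Qout : ℕ)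
    (hub : Qin + Qout ≤ MK + MM1) (hsum : Sin + Sout = MK)
    (hout : 2 * Sout ≤ Qout) (hin : Sin ≤ Qin) (hSin : Sin + 1 ≤ k)
    (hMM : MM1 + k = MK) : False := by omega

lemma arith3 (k MK MM1 Sin Sout Qin Qout : ℕ)
    (hub : Qin + Qout ≤ MK + MM1) (hsum : Sin + Sout = MK)
    (hout : 2 * Sout ≤ Qout) (hin : Sin + 2 ≤ Qin) (hSin : Sin ≤ k)
    (hMM : MM1 + k = MK) : False := by omega

lemma main_contra {v k r : ℕ} (hk : 3 ≤ k) (hr : k + 1 ≤ r)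
    (B : Finset (Finset (Fin v)))
    (hblock : ∀ b ∈ B, b.card = k)
    (hdes : ∀ p : Finset (Fin v), p.card = 2 → ∃! b, b ∈ B ∧ p ⊆ b)
    (heven : ∀ C ⊆ B, C.Nonempty → C.card ≤ r → ¬ IsEvenConfig C)
    (C : Finset (Finset (Fin v))) (hCB : C ⊆ B) (hne : C.Nonempty) (hCk : C.card ≤ k)
    (b₁ : Finset (Fin v)) (hb₁B : b₁ ∈ B) (hb₁C : b₁ ∉ C)
    (hev : ∀ p : Fin v, p ∉ b₁ → Even (t C p)) : False := by
  have hm1 : 0 < C.card := hne.card_pos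
  -- a point q of b₁ with even count
  obtain ⟨q, hqb₁, hqe⟩ : ∃ q ∈ b₁, Even (t C q) := by
    have h1 := heven (insert b₁ C) (Finset.insert_subset hb₁B hCB)
      ⟨b₁, Finset.mem_insert_self _ _⟩
      (by rw [Finset.card_insert_of_notMem hb₁C]; omega)
    unfold IsEvenConfig at h1
    push_neg at h1
    obtain ⟨q, hq⟩ := h1
    rw [Finset.filter_insert] at hq
    by_cases hqb : q ∈ b₁
    · refine ⟨q, hqb, ?_⟩
      rw [if_pos hqb, Finset.card_insert_of_notMem
        (fun h => hb₁C (Finset.mem_filter.1 h).1)] at hq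
      rw [Nat.even_add_one, not_not] at hq
      exact hq
    · rw [if_neg hqb] at hq
      exact absurd (hev q hqb) hq
  have hsplit : ∀ f : Fin v → ℕ,
      ∑ p : Fin v, f p = ∑ p ∈ b₁, f p + ∑ p ∈ Finset.univ.filter (fun p => p ∉ b₁), f p := by
    intro f
    rw [← Finset.sum_filter_add_sum_filter_not Finset.univ (fun p => p ∈ b₁)]
    congr 1
    exact Finset.sum_congr (by ext p; simp) (fun _ _ => rfl)
  have hT : ∑ p : Fin v, t C p = C.card * k := by
    rw [sum_t_eq, Finset.sum_congr rfl (fun b hb => hblock b (hCB hb)),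
      Finset.sum_const, smul_eq_mul]
  have hSinle : ∑ p ∈ b₁, t C p ≤ C.card := by
    rw [sum_t_on]
    calc ∑ b ∈ C, (b ∩ b₁).card ≤ ∑ b ∈ C, 1 := Finset.sum_le_sum fun b hb =>
          inter_card_le_one hdes (hCB hb) hb₁B (fun h => hb₁C (h ▸ hb))
      _ = C.card := by rw [Finset.sum_const, smul_eq_mul, mul_one]
  have hsum : ∑ p ∈ b₁, t C p + ∑ p ∈ Finset.univ.filter (fun p => p ∉ b₁), t C p
      = C.card * k := by rw [← hsplit, hT]
  have hub : ∑ p ∈ b₁, t C p * t C p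
        + ∑ p ∈ Finset.univ.filter (fun p => p ∉ b₁), t C p * t C p
      ≤ C.card * k + C.card * (C.card - 1) := by
    rw [← hsplit fun p => t C p * t C p, ← hT]
    exact pairbound hdes C hCB
  have hout : 2 * ∑ p ∈ Finset.univ.filter (fun p => p ∉ b₁), t C p
      ≤ ∑ p ∈ Finset.univ.filter (fun p => p ∉ b₁), t C p * t C p := by
    rw [Finset.mul_sum]
    refine Finset.sum_le_sum fun p hp => ?_
    have hev' := hev p (by simpa using (Finset.mem_filter.1 hp).2)
    obtain ⟨c, hc⟩ := hev'
    have : t C p = 0 ∨ 2 ≤ t C p := by omega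
    rcases this with h | h
    · simp [h]
    · exact Nat.mul_le_mul_right _ h
  have hle_sq : ∀ n : ℕ, n ≤ n * n := by
    intro n
    rcases Nat.eq_zero_or_pos n with h | h
    · simp [h]
    · exact Nat.le_mul_of_pos_left n h
  have hin : ∑ p ∈ b₁, t C p ≤ ∑ p ∈ b₁, t C p * t C p :=
    Finset.sum_le_sum fun p _ => hle_sq _
  rcases lt_or_eq_of_le hCk with hlt | hmk
  · exact arith1 C.card k (C.card * k) (C.card * (C.card - 1)) (C.card * C.card)
      _ _ _ _ hub hsum hout hin hSinle (mul_pred_add C.card)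
      (mul_lt_mul_of_pos_left hlt hm1)
  · have hMM : C.card * (C.card - 1) + k = C.card * k := by
      rw [hmk]; exact mul_pred_add k
    rw [hmk] at hSinle
    by_cases hA : ∑ p ∈ b₁, t C p = k
    · -- find a point of b₁ with multiplicity at least 2
      obtain ⟨ps, hpsb, hps2⟩ : ∃ p ∈ b₁, 2 ≤ t C p := by
        by_cases hq2 : 2 ≤ t C q
        · exact ⟨q, hqb₁, hq2⟩
        · have hq0 : t C q = 0 := by obtain ⟨c, hc⟩ := hqe; omega
          by_contra hall
          push_neg at hall
          have h1 : ∑ p ∈ b₁.erase q, t C p ≤ (b₁.erase q).card * 1 := by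
            refine Finset.sum_le_card_nsmul _ _ 1 fun p hp => ?_
            have := hall p (Finset.mem_of_mem_erase hp)
            omega
          have h2 : ∑ p ∈ b₁.erase q, t C p + t C q = ∑ p ∈ b₁, t C p :=
            Finset.sum_erase_add b₁ _ hqb₁
          rw [Finset.card_erase_of_mem hqb₁, hblock b₁ hb₁B] at h1
          omega
      have hin2 : ∑ p ∈ b₁, t C p + 2 ≤ ∑ p ∈ b₁, t C p * t C p := by
        have h2 : ∑ p ∈ b₁.erase ps, t C p + t C ps = ∑ p ∈ b₁, t C p :=
          Finset.sum_erase_add b₁ _ hpsb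
        have h5 : ∑ p ∈ b₁.erase ps, t C p * t C p + t C ps * t C ps
            = ∑ p ∈ b₁, t C p * t C p := Finset.sum_erase_add b₁ _ hpsb
        have h3 : ∑ p ∈ b₁.erase ps, t C p ≤ ∑ p ∈ b₁.erase ps, t C p * t C p :=
          Finset.sum_le_sum fun p _ => hle_sq _
        have h4 : t C ps + 2 ≤ t C ps * t C ps := by
          calc t C ps + 2 ≤ t C ps + t C ps := by omega
            _ = 2 * t C ps := by ring
            _ ≤ t C ps * t C ps := Nat.mul_le_mul_right _ hps2
        omega
      exact arith3 k (C.card * k) (C.card * (C.card - 1)) _ _ _ _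
        hub hsum hout hin2 hSinle hMM
    · exact arith2 k (C.card * k) (C.card * (C.card - 1)) _ _ _ _
        hub hsum hout hin (by omega) hMM

end XCodeAux

open XCodeAux

/-- For `k ≥ 3` and `r ≥ k+1`, the block indicator vectors of an `r`-even-free Steiner
2-design `S(2,k,v)` form a `(v, v(v-1)/(k(k-1)), 1, k-1)` X-code of constant weight `k`
that is also a `(v, v(v-1)/(k(k-1)), k, 1)` X-code and a
`(v, v(v-1)/(k(k-1)), r, 0)` X-code. -/
theorem rEvenFree_steiner2_xcode (k r v : ℕ) (hk : 3 ≤ k) (hr : k + 1 ≤ r)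
    (B : Finset (Finset (Fin v)))
    (hblock : ∀ b ∈ B, b.card = k)
    (hdes : ∀ p : Finset (Fin v), p.card = 2 → ∃! b, b ∈ B ∧ p ⊆ b)
    (heven : ∀ C ⊆ B, C.Nonempty → C.card ≤ r → ¬ IsEvenConfig C) :
    (B.image fun b => fun p : Fin v => if p ∈ b then (1 : ZMod 2) else 0).card
        = v * (v - 1) / (k * (k - 1)) ∧
      (∀ s ∈ B.image fun b => fun p : Fin v => if p ∈ b then (1 : ZMod 2) else 0,
        wt s = k) ∧
      IsXCode 1 (k - 1)
        (B.image fun b => fun p : Fin v => if p ∈ b then (1 : ZMod 2) else 0) ∧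
      IsXCode k 1
        (B.image fun b => fun p : Fin v => if p ∈ b then (1 : ZMod 2) else 0) ∧
      IsXCode r 0
        (B.image fun b => fun p : Fin v => if p ∈ b then (1 : ZMod 2) else 0) := by
  have hlam : (fun b => fun p : Fin v => if p ∈ b then (1 : ZMod 2) else 0) = φ v := rfl
  rw [hlam]
  refine ⟨?_, ?_, ?_, ?_, ?_⟩
  · -- cardinality
    rw [Finset.card_image_of_injective _ φ_inj]
    have hP : (Finset.powersetCard 2 (Finset.univ : Finset (Fin v)))
        = B.biUnion (fun b => Finset.powersetCard 2 b) := by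
      ext p
      simp only [Finset.mem_powersetCard, Finset.mem_biUnion]
      constructor
      · rintro ⟨-, hp2⟩
        obtain ⟨b, ⟨hbB, hpb⟩, -⟩ := hdes p hp2
        exact ⟨b, hbB, hpb, hp2⟩
      · rintro ⟨b, -, -, hp2⟩
        exact ⟨Finset.subset_univ _, hp2⟩
    have hdisj : ∀ x ∈ B, ∀ y ∈ B, x ≠ y →
        Disjoint (Finset.powersetCard 2 x) (Finset.powersetCard 2 y) := by
      intro x hx y hy hxy
      rw [Finset.disjoint_left]
      intro p hp hp'
      rw [Finset.mem_powersetCard] at hp hp'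
      obtain ⟨c, -, hu⟩ := hdes p hp.2
      exact hxy ((hu x ⟨hx, hp.1⟩).trans (hu y ⟨hy, hp'.1⟩).symm)
    have hcount : v.choose 2 = B.card * k.choose 2 := by
      have h1 : (Finset.powersetCard 2 (Finset.univ : Finset (Fin v))).card = v.choose 2 := by
        rw [Finset.card_powersetCard]
        simp
      rw [← h1, hP, Finset.card_biUnion hdisj,
        Finset.sum_congr rfl (fun b hb => by rw [Finset.card_powersetCard, hblock b hb]),
        Finset.sum_const, smul_eq_mul]
    have hvv : v * (v - 1) = B.card * (k * (k - 1)) := by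
      calc v * (v - 1) = 2 * v.choose 2 := (two_mul_choose_two v).symm
        _ = 2 * (B.card * k.choose 2) := by rw [hcount]
        _ = B.card * (2 * k.choose 2) := by ring
        _ = B.card * (k * (k - 1)) := by rw [two_mul_choose_two]
    have hkpos : 0 < k * (k - 1) := Nat.mul_pos (by omega) (by omega)
    rw [hvv, Nat.mul_div_cancel _ hkpos]
  · -- constant weight
    intro s hs
    obtain ⟨b, hb, rfl⟩ := Finset.mem_image.1 hs
    have hfb : (Finset.univ.filter fun j => φ v b j ≠ 0) = b := by
      ext p
      by_cases h : p ∈ b <;> simp [φ, h]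
    rw [wt, hfb, hblock b hb]
  · -- (1, k-1) X-code
    intro S₁ S₂ hS₁ hS₂ hdisj hS₁card hS₂1 hS₂d
    obtain ⟨s, rfl⟩ := Finset.card_eq_one.1 (le_antisymm hS₂d hS₂1)
    obtain ⟨b₂, hb₂B, rfl⟩ := Finset.mem_image.1 (hS₂ (Finset.mem_singleton_self s))
    obtain ⟨C₁, hC₁B, hC₁im, hC₁card⟩ := exists_preimage B S₁ hS₁
    have hb₂C₁ : b₂ ∉ C₁ := by
      intro h
      exact Finset.disjoint_left.1 hdisj
        (by rw [← hC₁im]; exact Finset.mem_image_of_mem _ h) (Finset.mem_singleton_self _)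
    have hcov : (b₂.filter (fun j => ∃ b ∈ C₁, j ∈ b)).card ≤ k - 1 := by
      have hsub : b₂.filter (fun j => ∃ b ∈ C₁, j ∈ b) ⊆ C₁.biUnion (fun b => b₂ ∩ b) := by
        intro j hj
        rw [Finset.mem_filter] at hj
        obtain ⟨hjb₂, b, hbC, hjb⟩ := hj
        exact Finset.mem_biUnion.2 ⟨b, hbC, Finset.mem_inter.2 ⟨hjb₂, hjb⟩⟩
      calc (b₂.filter (fun j => ∃ b ∈ C₁, j ∈ b)).card
          ≤ (C₁.biUnion (fun b => b₂ ∩ b)).card := Finset.card_le_card hsub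
        _ ≤ ∑ b ∈ C₁, (b₂ ∩ b).card := Finset.card_biUnion_le
        _ ≤ ∑ b ∈ C₁, 1 := Finset.sum_le_sum fun b hb =>
            inter_card_le_one hdes hb₂B (hC₁B hb) (fun h => hb₂C₁ (h ▸ hb))
        _ = C₁.card := by rw [Finset.sum_const, smul_eq_mul, mul_one]
        _ ≤ k - 1 := hC₁card ▸ hS₁card
    obtain ⟨j, hjb₂, hjP⟩ : ∃ j ∈ b₂, ¬ (∃ b ∈ C₁, j ∈ b) := by
      by_contra h
      push_neg at h
      have heq : b₂.filter (fun j => ∃ b ∈ C₁, j ∈ b) = b₂ :=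
        Finset.filter_true_of_mem (fun j hj => h j hj)
      rw [heq, hblock b₂ hb₂B] at hcov
      omega
    push_neg at hjP
    refine ⟨j, ?_, ?_⟩
    · rw [Finset.sum_singleton]
      simp [φ, hjb₂]
    · intro s hs
      rw [← hC₁im] at hs
      obtain ⟨b, hb, rfl⟩ := Finset.mem_image.1 hs
      simp [φ, hjP b hb]
  · -- (k, 1) X-code
    intro S₁ S₂ hS₁ hS₂ hdisjS hS₁card hS₂1 hS₂k
    obtain ⟨C₂, hC₂B, hC₂im, hC₂card⟩ := exists_preimage B S₂ hS₂
    have hC₂ne : C₂.Nonempty := Finset.card_pos.1 (by omega)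
    by_contra hno
    push_neg at hno
    rcases Nat.le_one_iff_eq_zero_or_eq_one.1 hS₁card with h0 | h1
    · -- S₁ empty
      have hS₁e : S₁ = ∅ := Finset.card_eq_zero.1 h0
      have hevC : ∀ p : Fin v, Even (t C₂ p) := by
        intro p
        by_contra hodd
        obtain ⟨s, hs, -⟩ := hno p (by rw [← hC₂im, sum_coord]; exact (cast_one_iff _).2 hodd)
        simp [hS₁e] at hs
      exact heven C₂ hC₂B hC₂ne (by omega) (fun p => hevC p)
    · -- S₁ singleton
      obtain ⟨s₁, hS₁e⟩ := Finset.card_eq_one.1 h1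
      obtain ⟨b₁, hb₁B, hs₁⟩ := Finset.mem_image.1 (hS₁ (hS₁e ▸ Finset.mem_singleton_self s₁))
      have hb₁C₂ : b₁ ∉ C₂ := by
        intro h
        have hm1 : φ v b₁ ∈ S₁ := by rw [hS₁e, Finset.mem_singleton]; exact hs₁
        have hm2 : φ v b₁ ∈ S₂ := by rw [← hC₂im]; exact Finset.mem_image_of_mem _ h
        exact Finset.disjoint_left.1 hdisjS hm1 hm2
      have hev : ∀ p : Fin v, p ∉ b₁ → Even (t C₂ p) := by
        intro p hpb₁
        by_contra hodd
        obtain ⟨s, hs, hsp⟩ := hno p (by rw [← hC₂im, sum_coord]; exact (cast_one_iff _).2 hodd)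
        rw [hS₁e, Finset.mem_singleton] at hs
        subst hs
        rw [← hs₁] at hsp
        exact hsp (by simp [φ, hpb₁])
      exact main_contra hk hr B hblock hdes heven C₂ hC₂B hC₂ne (by omega)
        b₁ hb₁B hb₁C₂ hev
  · -- (r, 0) X-code
    intro S₁ S₂ hS₁ hS₂ hdisjS hS₁card hS₂1 hS₂r
    have hS₁e : S₁ = ∅ := Finset.card_eq_zero.1 (le_antisymm hS₁card (Nat.zero_le _))
    obtain ⟨C₂, hC₂B, hC₂im, hC₂card⟩ := exists_preimage B S₂ hS₂
    have hC₂ne : C₂.Nonempty := Finset.card_pos.1 (by omega)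
    have hnc := heven C₂ hC₂B hC₂ne (by omega)
    unfold IsEvenConfig at hnc
    push_neg at hnc
    obtain ⟨p, hp⟩ := hnc
    refine ⟨p, ?_, by simp [hS₁e]⟩
    rw [← hC₂im, sum_coord]
    exact (cast_one_iff _).2 hp
end

section
/- Let d ≥ 1, x ≥ 0 be integers and set w = max{d,x}+1. Let n ≥ w and u ≥ w. If there exist an (m,n,d,x) X-code and a perfect hash family PHF(N; u, n, w), then there exists an (mN, u, d, x) X-code. -/
/-- A perfect hash family `PHF(N; u, n, w)`: a family of `N` functions from a
`u`-element set to an `n`-element set such that every `w`-element subset of the domain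
is mapped injectively by at least one function of the family. -/
def IsPHF (N u n w : ℕ) (F : Fin N → Fin u → Fin n) : Prop :=
  ∀ C : Finset (Fin u), C.card = w → ∃ i : Fin N, Set.InjOn (F i) ↑C

/-- If an `(m,n,d,x)` X-code and a `PHF(N; u, n, max{d,x}+1)` exist (with
`n, u ≥ max{d,x}+1` and `d ≥ 1`), then an `(mN, u, d, x)` X-code exists. -/
theorem xcode_phf_construction (m N u n d x w : ℕ) (hd : 1 ≤ d)
    (hw : w = max d x + 1) (hn : w ≤ n) (hu : w ≤ u)
    (hX : ∃ X : Finset (Fin m → ZMod 2), X.card = n ∧ IsXCode d x X)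
    (hF : ∃ F : Fin N → Fin u → Fin n, IsPHF N u n w F) :
    ∃ Z : Finset (Fin (m * N) → ZMod 2), Z.card = u ∧ IsXCode d x Z := by
  classical
  obtain ⟨X, hXcard, hXcode⟩ := hX
  obtain ⟨F, hPHF⟩ := hF
  have hdw : d + 1 ≤ w := by have := le_max_left d x; omega
  have hxw : x + 1 ≤ w := by have := le_max_right d x; omega
  -- enumeration of the codewords of X
  let e : (X : Type _) ≃ Fin n := X.equivFinOfCardEq hXcard
  let c : Fin n → (Fin m → ZMod 2) := fun v => (e.symm v : Fin m → ZMod 2)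
  have hc_mem : ∀ v, c v ∈ X := fun v => (e.symm v).2
  have hc_inj : Function.Injective c := fun v v' h => e.symm.injective (Subtype.ext h)
  -- the composed code
  let z : Fin u → Fin (m * N) → ZMod 2 := fun a j =>
    c (F (finProdFinEquiv.symm j).2 a) (finProdFinEquiv.symm j).1
  have hz_eval : ∀ (a : Fin u) (k : Fin m) (i : Fin N),
      z a (finProdFinEquiv (k, i)) = c (F i a) k := by
    intro a k i
    simp only [z, Equiv.symm_apply_apply]
  -- for any small set there is an injective hash function
  have key : ∀ D : Finset (Fin u), D.card ≤ w → ∃ i : Fin N, Set.InjOn (F i) ↑D := by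
    intro D hD
    obtain ⟨C, hDC, -, hCcard⟩ :=
      Finset.exists_subsuperset_card_eq (D.subset_univ) hD (by simpa using hu)
    obtain ⟨i, hi⟩ := hPHF C hCcard
    exact ⟨i, hi.mono (by exact_mod_cast Finset.coe_subset.mpr hDC)⟩
  have hz_inj : Function.Injective z := by
    intro a a' hzz
    by_contra hne
    have hcard : ({a, a'} : Finset (Fin u)).card ≤ w := by
      have h2 := Finset.card_insert_le a ({a'} : Finset (Fin u))
      simp only [Finset.card_singleton] at h2
      omega
    obtain ⟨i, hi⟩ := key {a, a'} hcard
    have hF' : F i a ≠ F i a' := by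
      intro h
      exact hne (hi (by simp) (by simp) h)
    have hcc : c (F i a) ≠ c (F i a') := fun h => hF' (hc_inj h)
    obtain ⟨k, hk⟩ := Function.ne_iff.mp hcc
    exact hk (by rw [← hz_eval a k i, ← hz_eval a' k i, hzz])
  refine ⟨Finset.univ.image z, ?_, ?_⟩
  · rw [Finset.card_image_of_injective _ hz_inj, Finset.card_univ, Fintype.card_fin]
  intro S₁ S₂ hS₁ hS₂ hdisj hx₁ hd₁ hd₂
  -- pull back to index sets
  set A₁ : Finset (Fin u) := Finset.univ.filter (fun a => z a ∈ S₁) with hA₁def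
  set A₂ : Finset (Fin u) := Finset.univ.filter (fun a => z a ∈ S₂) with hA₂def
  have himg : ∀ S : Finset (Fin (m * N) → ZMod 2), S ⊆ Finset.univ.image z →
      (Finset.univ.filter (fun a => z a ∈ S)).image z = S := by
    intro S hS
    ext s
    simp only [Finset.mem_image, Finset.mem_filter, Finset.mem_univ, true_and]
    constructor
    · rintro ⟨a, ha, rfl⟩; exact ha
    · intro hs
      obtain ⟨a, -, rfl⟩ := Finset.mem_image.mp (hS hs)
      exact ⟨a, hs, rfl⟩
  have himg₁ : A₁.image z = S₁ := himg S₁ hS₁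
  have himg₂ : A₂.image z = S₂ := himg S₂ hS₂
  have hcard₁ : A₁.card = S₁.card := by
    rw [← himg₁, Finset.card_image_of_injective _ hz_inj]
  have hcard₂ : A₂.card = S₂.card := by
    rw [← himg₂, Finset.card_image_of_injective _ hz_inj]
  have hAdisj : Disjoint A₁ A₂ := by
    rw [Finset.disjoint_left]
    intro a h1 h2
    rw [hA₁def, Finset.mem_filter] at h1
    rw [hA₂def, Finset.mem_filter] at h2
    exact Finset.disjoint_left.mp hdisj h1.2 h2.2
  -- choose the subset A₁' of A₁ to be separated from A₂
  obtain ⟨A₁', hA₁'sub, hA₁'card⟩ :=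
    Finset.exists_subset_card_eq (min_le_left A₁.card (w - A₂.card))
  have hDcard : (A₂ ∪ A₁').card ≤ w := by
    have h1 := Finset.card_union_le A₂ A₁'
    have h2 : min A₁.card (w - A₂.card) ≤ w - A₂.card := min_le_right _ _
    omega
  obtain ⟨i, hi⟩ := key (A₂ ∪ A₁') hDcard
  have hiA₂ : Set.InjOn (F i) ↑A₂ :=
    hi.mono (by exact_mod_cast Finset.coe_subset.mpr Finset.subset_union_left)
  -- key claim: some element of A₂ has its hash value outside F i '' A₁
  have hclaim : ∃ a₂ ∈ A₂, F i a₂ ∉ A₁.image (F i) := by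
    by_contra hcon
    push_neg at hcon
    have hsub2 : A₂.image (F i) ⊆ A₁.image (F i) := by
      intro v hv
      obtain ⟨a, ha, rfl⟩ := Finset.mem_image.mp hv
      exact hcon a ha
    have hsub1 : A₁'.image (F i) ⊆ A₁.image (F i) :=
      Finset.image_subset_image hA₁'sub
    have hdisj' : Disjoint (A₂.image (F i)) (A₁'.image (F i)) := by
      rw [Finset.disjoint_left]
      intro v hv2 hv1
      obtain ⟨a, ha, rfl⟩ := Finset.mem_image.mp hv2
      obtain ⟨a', ha', hva⟩ := Finset.mem_image.mp hv1
      have haa' : a' = a := hi (Finset.mem_coe.mpr (Finset.mem_union.mpr (Or.inr ha')))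
        (Finset.mem_coe.mpr (Finset.mem_union.mpr (Or.inl ha))) hva
      have : a ∈ A₁ := hA₁'sub (haa' ▸ ha')
      exact Finset.disjoint_left.mp hAdisj this ha
    have hc2 : (A₂.image (F i)).card = A₂.card :=
      Finset.card_image_of_injOn hiA₂
    have hc1 : (A₁'.image (F i)).card = A₁'.card :=
      Finset.card_image_of_injOn
        (hi.mono (by exact_mod_cast Finset.coe_subset.mpr Finset.subset_union_right))
    have hunion : (A₂.image (F i) ∪ A₁'.image (F i)).card ≤ (A₁.image (F i)).card :=
      Finset.card_le_card (Finset.union_subset hsub2 hsub1)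
    rw [Finset.card_union_of_disjoint hdisj', hc2, hc1] at hunion
    have hile : (A₁.image (F i)).card ≤ A₁.card := Finset.card_image_le
    have hmin := min_choice A₁.card (w - A₂.card)
    have hb1 : 1 ≤ A₂.card := by omega
    have hbd : A₂.card ≤ d := by omega
    have hax : A₁.card ≤ x := by omega
    rcases hmin with h | h <;> omega
  obtain ⟨a₂, ha₂, ha₂out⟩ := hclaim
  -- the colliding indices
  set T : Finset (Fin u) := A₂.filter (fun a => F i a ∈ A₁.image (F i)) with hTdef
  have hTsub : T ⊆ A₂ := Finset.filter_subset _ _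
  set S₁'' : Finset (Fin m → ZMod 2) := A₁.image (fun a => c (F i a)) with hS₁''def
  set S₂'' : Finset (Fin m → ZMod 2) := (A₂ \ T).image (fun a => c (F i a)) with hS₂''def
  have hS₁''X : S₁'' ⊆ X := by
    intro s hs
    obtain ⟨a, -, rfl⟩ := Finset.mem_image.mp hs
    exact hc_mem _
  have hS₂''X : S₂'' ⊆ X := by
    intro s hs
    obtain ⟨a, -, rfl⟩ := Finset.mem_image.mp hs
    exact hc_mem _
  have hdisj'' : Disjoint S₁'' S₂'' := by
    rw [Finset.disjoint_right]
    intro s hs2 hs1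
    obtain ⟨a, ha, rfl⟩ := Finset.mem_image.mp hs2
    obtain ⟨a', ha', hva⟩ := Finset.mem_image.mp hs1
    rw [Finset.mem_sdiff] at ha
    apply ha.2
    rw [hTdef, Finset.mem_filter]
    exact ⟨ha.1, Finset.mem_image.mpr ⟨a', ha', hc_inj hva⟩⟩
  have hx'' : S₁''.card ≤ x := by
    have h0 : S₁''.card ≤ A₁.card := Finset.card_image_le
    omega
  have hd₂'' : S₂''.card ≤ d := by
    have h1 : S₂''.card ≤ (A₂ \ T).card := Finset.card_image_le
    have h2 : (A₂ \ T).card ≤ A₂.card := Finset.card_le_card (Finset.sdiff_subset)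
    omega
  have hd₁'' : 1 ≤ S₂''.card := by
    rw [Nat.one_le_iff_ne_zero, ← Nat.pos_iff_ne_zero, Finset.card_pos]
    refine ⟨c (F i a₂), Finset.mem_image.mpr ⟨a₂, ?_, rfl⟩⟩
    rw [Finset.mem_sdiff]
    refine ⟨ha₂, fun hT => ?_⟩
    rw [hTdef, Finset.mem_filter] at hT
    exact ha₂out hT.2
  obtain ⟨k, hk1, hk0⟩ := hXcode S₁'' S₂'' hS₁''X hS₂''X hdisj'' hx'' hd₁'' hd₂''
  refine ⟨finProdFinEquiv (k, i), ?_, ?_⟩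
  · -- the sum over S₂ is 1 at this coordinate
    rw [← himg₂, Finset.sum_image (fun a _ a' _ h => hz_inj h)]
    calc ∑ a ∈ A₂, z a (finProdFinEquiv (k, i))
        = ∑ a ∈ A₂, c (F i a) k := Finset.sum_congr rfl (fun a _ => hz_eval a k i)
      _ = (∑ a ∈ A₂ \ T, c (F i a) k) + ∑ a ∈ T, c (F i a) k :=
          (Finset.sum_sdiff hTsub).symm
      _ = 1 := by
          have hT0 : (∑ a ∈ T, c (F i a) k) = 0 := by
            apply Finset.sum_eq_zero
            intro a ha
            rw [hTdef, Finset.mem_filter] at ha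
            obtain ⟨a', ha', hva⟩ := Finset.mem_image.mp ha.2
            have hcc : c (F i a) = c (F i a') := by rw [hva]
            rw [hcc]
            exact hk0 _ (Finset.mem_image.mpr ⟨a', ha', rfl⟩)
          have hsum : (∑ s ∈ S₂'', s k) = ∑ a ∈ A₂ \ T, c (F i a) k := by
            rw [hS₂''def]
            exact Finset.sum_image (fun a ha a' ha' h =>
              hiA₂ (Finset.mem_coe.mpr (Finset.mem_sdiff.mp ha).1)
                (Finset.mem_coe.mpr (Finset.mem_sdiff.mp ha').1) (hc_inj h))
          rw [hT0, ← hsum, hk1, add_zero]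
  · intro s hs
    rw [← himg₁] at hs
    obtain ⟨a, ha, rfl⟩ := Finset.mem_image.mp hs
    rw [hz_eval a k i]
    exact hk0 _ (Finset.mem_image.mpr ⟨a, ha, rfl⟩)
end

section
/- Let d and x be positive integers and let n ≥ max{2d, d+x} be an integer. If m is a positive integer with m ≥ 2^{x+1}·(d+x)·ln n (natural logarithm), then there exists an (m,n,d,x) X-code. -/
open Finset

lemma sum_choose_le {n : ℕ} (hn2 : 2 ≤ n) {k : ℕ} (hk : k ≤ n) :
    ∀ d : ℕ, 1 ≤ d → (∑ b ∈ Finset.Icc 1 d, Nat.choose k b) ≤ k * n ^ (d - 1) := by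
  intro d
  induction d with
  | zero => intro h; exact absurd h (by omega)
  | succ d ih =>
    intro _
    rcases Nat.eq_zero_or_pos d with rfl | hd
    · simp
    · rw [Finset.sum_Icc_succ_top (by omega : 1 ≤ d + 1)]
      have h1 := ih hd
      have h2 : 2 * Nat.choose k (d + 1) ≤ k * n ^ d := by
        calc 2 * Nat.choose k (d+1) ≤ (d+1).factorial * Nat.choose k (d+1) :=
              Nat.mul_le_mul_right _ (le_trans (by omega) (Nat.self_le_factorial (d+1)))
        _ = k.descFactorial (d+1) := (Nat.descFactorial_eq_factorial_mul_choose k (d+1)).symm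
        _ ≤ k ^ (d+1) := Nat.descFactorial_le_pow k (d+1)
        _ = k * k ^ d := by rw [pow_succ']
        _ ≤ k * n ^ d := Nat.mul_le_mul_left k (Nat.pow_le_pow_left hk d)
      have h3 : 2 * (k * n ^ (d-1)) ≤ k * n ^ d := by
        have hnd : n ^ d = n * n ^ (d - 1) := by
          rw [← pow_succ']; congr 1; omega
        calc 2 * (k * n ^ (d-1)) = k * (2 * n ^ (d-1)) := by ring
        _ ≤ k * (n * n ^ (d-1)) := Nat.mul_le_mul_left k (Nat.mul_le_mul_right _ hn2)
        _ = k * n ^ d := by rw [hnd]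
      have h4 : (∑ b ∈ Finset.Icc 1 d, Nat.choose k b) + Nat.choose k (d+1)
          ≤ k * n ^ (d-1) + Nat.choose k (d+1) := by omega
      have h5 : 2 * (k * n ^ (d-1) + Nat.choose k (d+1)) ≤ 2 * (k * n ^ d) := by omega
      have h6 := Nat.le_of_mul_le_mul_left h5 (by omega : 0 < 2)
      calc (∑ b ∈ Finset.Icc 1 d, Nat.choose k b) + Nat.choose k (d+1)
          ≤ k * n ^ (d-1) + Nat.choose k (d+1) := h4
      _ ≤ k * n ^ d := h6
      _ = k * n ^ (d + 1 - 1) := by norm_num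


lemma good_col_count {n : ℕ} (I J : Finset (Fin n)) (hJ : J.Nonempty) (hD : Disjoint I J) :
    2 ^ (n - I.card - 1) ≤ (Finset.univ.filter
      (fun v : Fin n → ZMod 2 => (∑ i ∈ J, v i) = 1 ∧ ∀ i ∈ I, v i = 0)).card := by
  classical
  obtain ⟨i₀, hi₀⟩ := hJ
  have hi₀I : i₀ ∉ I := fun hmem => (Finset.disjoint_left.mp hD hmem) hi₀
  set K : Finset (Fin n) := insert i₀ I with hK
  have hKcard : K.card = I.card + 1 := Finset.card_insert_of_notMem hi₀I
  -- extension by zero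
  let ext : ({ i : Fin n // i ∉ K } → ZMod 2) → (Fin n → ZMod 2) :=
    fun f i => if h : i ∈ K then 0 else f ⟨i, h⟩
  let F : ({ i : Fin n // i ∉ K } → ZMod 2) → (Fin n → ZMod 2) :=
    fun f i => if i ∈ I then 0 else if i = i₀ then 1 + ∑ i' ∈ J.erase i₀, ext f i' else ext f i
  have hFout : ∀ f, ∀ i : Fin n, (h : i ∉ K) → F f i = f ⟨i, h⟩ := by
    intro f i h
    have h1 : i ∉ I := fun hi => h (Finset.mem_insert_of_mem hi)
    have h2 : i ≠ i₀ := fun hi => h (hi ▸ Finset.mem_insert_self i₀ I)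
    simp only [F, ext, if_neg h1, if_neg h2, dif_neg h]
  have hmaps : ∀ f, F f ∈ Finset.univ.filter
      (fun v : Fin n → ZMod 2 => (∑ i ∈ J, v i) = 1 ∧ ∀ i ∈ I, v i = 0) := by
    intro f
    rw [Finset.mem_filter]
    refine ⟨Finset.mem_univ _, ?_, ?_⟩
    · rw [← Finset.add_sum_erase J (F f) hi₀]
      have h1 : F f i₀ = 1 + ∑ i' ∈ J.erase i₀, ext f i' := by
        simp only [F, if_neg hi₀I, if_pos rfl]
        simp
      have h2 : ∑ i ∈ J.erase i₀, F f i = ∑ i' ∈ J.erase i₀, ext f i' := by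
        apply Finset.sum_congr rfl
        intro i hi
        have hiJ : i ∈ J := Finset.mem_of_mem_erase hi
        have hiI : i ∉ I := fun hmem => (Finset.disjoint_left.mp hD hmem) hiJ
        have hii₀ : i ≠ i₀ := Finset.ne_of_mem_erase hi
        simp only [F, if_neg hiI, if_neg hii₀]
      rw [h1, h2, add_assoc, CharTwo.add_self_eq_zero, add_zero]
    · intro i hi
      simp only [F, if_pos hi]
  have hinj : Set.InjOn F ↑(Finset.univ : Finset ({ i : Fin n // i ∉ K } → ZMod 2)) := by
    intro f _ g _ hfg
    funext ⟨i, hi⟩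
    have := congrFun hfg i
    rwa [hFout f i hi, hFout g i hi] at this
  have hcard := Finset.card_le_card_of_injOn F (fun f _ => hmaps f) hinj
  have huniv : (Finset.univ : Finset ({ i : Fin n // i ∉ K } → ZMod 2)).card
      = 2 ^ (n - I.card - 1) := by
    rw [Finset.card_univ, Fintype.card_fun, ZMod.card 2,
      Fintype.card_subtype_compl, Fintype.card_coe, Fintype.card_fin, hKcard]
    congr 1
  rwa [huniv] at hcard

lemma core_sum_lt (d x n m : ℕ) (hd : 0 < d) (hx : 0 < x)
    (hn : max (2 * d) (d + x) ≤ n) (hm : 0 < m)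
    (h : (2 : ℝ) ^ (x + 1) * ((d : ℝ) + (x : ℝ)) * Real.log n ≤ (m : ℝ)) :
    ∑ p ∈ (Finset.univ.filter (fun p : Finset (Fin n) × Finset (Fin n) =>
        p.1.card ≤ x ∧ 1 ≤ p.2.card ∧ p.2.card ≤ d ∧ Disjoint p.1 p.2)),
      (2 ^ n - 2 ^ (n - p.1.card - 1)) ^ m < 2 ^ (n * m) := by
  classical
  have hdxn : d + x ≤ n := le_trans (le_max_right _ _) hn
  have hn2 : 2 ≤ n := by omega
  have hxn : x ≤ n := by omega
  set N : ℝ := (n : ℝ) with hN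
  have hN2 : (2:ℝ) ≤ N := by rw [hN]; exact_mod_cast hn2
  have hNpos : 0 < N := by linarith
  set t : ℝ := ((2:ℝ)⁻¹)^(x+1) with ht
  have ht0 : 0 ≤ t := by positivity
  have ht1 : t ≤ 1 := pow_le_one₀ (by norm_num) (by norm_num)
  set g : ℕ → ℝ := fun a => (1 - ((2:ℝ)⁻¹)^(a+1))^m with hg
  have hg0 : ∀ a, 0 ≤ g a := by
    intro a
    have : ((2:ℝ)⁻¹)^(a+1) ≤ 1 := pow_le_one₀ (by norm_num) (by norm_num)
    exact pow_nonneg (by linarith) m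
  set ε : ℝ := (1 - t)^m with hε
  have hgx : g x = ε := rfl
  have hε0 : 0 ≤ ε := hg0 x
  have hε1 : ε ≤ 1 := pow_le_one₀ (by linarith) (by linarith)
  -- ε ≤ (N^(d+x))⁻¹
  have hεn : ε ≤ (N ^ (d + x))⁻¹ := by
    have e1 : (1:ℝ) - t ≤ Real.exp (-t) := by
      have := Real.add_one_le_exp (-t); linarith
    have e2 : ε ≤ Real.exp (-t) ^ m := pow_le_pow_left₀ (by linarith) e1 m
    rw [← Real.exp_nat_mul] at e2
    have htt : t * 2^(x+1) = 1 := by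
      rw [ht, ← mul_pow]; norm_num
    have e3 : ((d:ℝ)+(x:ℝ)) * Real.log N ≤ (m:ℝ) * t := by
      calc ((d:ℝ)+(x:ℝ)) * Real.log N
          = ((2:ℝ)^(x+1) * ((d:ℝ)+(x:ℝ)) * Real.log N) * t := by
            linear_combination (-(((d:ℝ)+(x:ℝ)) * Real.log N)) * htt
        _ ≤ (m:ℝ) * t := mul_le_mul_of_nonneg_right h ht0
    have e4 : Real.exp ((m:ℝ) * -t) ≤ Real.exp (-(((d:ℝ)+(x:ℝ)) * Real.log N)) := by
      apply Real.exp_le_exp.mpr; nlinarith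
    have e5 : Real.exp (-(((d:ℝ)+(x:ℝ)) * Real.log N)) = (N ^ (d+x))⁻¹ := by
      rw [Real.exp_neg]
      congr 1
      have : ((d:ℝ)+(x:ℝ)) = ((d + x : ℕ) : ℝ) := by push_cast; ring
      rw [this, Real.exp_nat_mul, Real.exp_log hNpos]
    calc ε ≤ Real.exp ((m:ℝ) * -t) := e2
    _ ≤ Real.exp (-(((d:ℝ)+(x:ℝ)) * Real.log N)) := e4
    _ = (N ^ (d+x))⁻¹ := e5
  -- g a ≤ ε ^ (2^(x-a)) for a ≤ x
  have hga : ∀ a, a ≤ x → g a ≤ ε ^ (2^(x-a)) := by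
    intro a hax
    have hb := one_add_mul_le_pow (a := -t) (by linarith) (2^(x-a))
    have hcast : ((2^(x-a) : ℕ) : ℝ) = (2:ℝ)^(x-a) := by push_cast; ring
    have hxat : (2:ℝ)^(x-a) * t = ((2:ℝ)⁻¹)^(a+1) := by
      have e : ((2:ℝ)⁻¹)^(x+1) = ((2:ℝ)⁻¹)^(x-a) * ((2:ℝ)⁻¹)^(a+1) := by
        rw [← pow_add]; congr 1; omega
      rw [ht, e, ← mul_assoc, ← mul_pow]; norm_num
    have hbase : (1:ℝ) - ((2:ℝ)⁻¹)^(a+1) ≤ (1 - t)^(2^(x-a)) := by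
      have this : (1:ℝ) + (2:ℝ)^(x-a) * (-t) ≤ (1 + -t)^(2^(x-a)) := by
        rw [← hcast]; exact hb
      calc (1:ℝ) - ((2:ℝ)⁻¹)^(a+1) = 1 + (2:ℝ)^(x-a) * (-t) := by rw [← hxat]; ring
      _ ≤ (1 + -t)^(2^(x-a)) := this
      _ = (1 - t)^(2^(x-a)) := by ring_nf
    have h0 : (0:ℝ) ≤ 1 - ((2:ℝ)⁻¹)^(a+1) := by
      have : ((2:ℝ)⁻¹)^(a+1) ≤ 1 := pow_le_one₀ (by norm_num) (by norm_num)
      linarith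
    calc g a ≤ ((1 - t)^(2^(x-a)))^m := pow_le_pow_left₀ h0 hbase m
    _ = ((1-t)^m)^(2^(x-a)) := by rw [← pow_mul, ← pow_mul, mul_comm]
    _ = ε ^ (2^(x-a)) := rfl
  have hga2 : ∀ a, a < x → g a ≤ ε^2 := by
    intro a hax
    calc g a ≤ ε ^ (2^(x-a)) := hga a (le_of_lt hax)
    _ ≤ ε^2 := by
        apply pow_le_pow_of_le_one hε0 hε1
        calc 2 = 2^1 := (pow_one 2).symm
        _ ≤ 2^(x-a) := Nat.pow_le_pow_right (by norm_num) (by omega)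
  -- counting J's for a fixed I
  have hcount : ∀ I : Finset (Fin n),
      (((univ.filter (fun J : Finset (Fin n) =>
          I.card ≤ x ∧ 1 ≤ J.card ∧ J.card ≤ d ∧ Disjoint I J)).card : ℕ) : ℝ)
        ≤ if I.card ≤ x then (((n - I.card) * n^(d-1) : ℕ) : ℝ) else 0 := by
    intro I
    split_ifs with hIx
    · have hsub : univ.filter (fun J : Finset (Fin n) =>
          I.card ≤ x ∧ 1 ≤ J.card ∧ J.card ≤ d ∧ Disjoint I J)
          ⊆ (Finset.Icc 1 d).biUnion (fun b => Finset.powersetCard b Iᶜ) := by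
        intro J hJ
        rw [Finset.mem_filter] at hJ
        obtain ⟨-, -, h1, h2, h3⟩ := hJ
        apply Finset.mem_biUnion.mpr
        refine ⟨J.card, by rw [Finset.mem_Icc]; omega, ?_⟩
        apply Finset.mem_powersetCard.mpr
        refine ⟨?_, rfl⟩
        intro i hi
        exact Finset.mem_compl.mpr (fun hI => (Finset.disjoint_left.mp h3 hI) hi)
      have hcard := le_trans (Finset.card_le_card hsub) (Finset.card_biUnion_le)
      have hIc : Iᶜ.card = n - I.card := by rw [Finset.card_compl, Fintype.card_fin]
      have hfin : ∑ b ∈ Finset.Icc 1 d, (Finset.powersetCard b Iᶜ).card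
          ≤ (n - I.card) * n^(d-1) := by
        calc ∑ b ∈ Finset.Icc 1 d, (Finset.powersetCard b Iᶜ).card
            = ∑ b ∈ Finset.Icc 1 d, Nat.choose (n - I.card) b := by
              refine Finset.sum_congr rfl (fun b _ => ?_)
              rw [Finset.card_powersetCard, hIc]
        _ ≤ (n - I.card) * n^(d-1) := sum_choose_le hn2 (Nat.sub_le n _) d hd
      exact_mod_cast le_trans hcard hfin
    · have hempty : univ.filter (fun J : Finset (Fin n) =>
          I.card ≤ x ∧ 1 ≤ J.card ∧ J.card ≤ d ∧ Disjoint I J) = ∅ := by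
        apply Finset.filter_eq_empty_iff.mpr
        intro J _
        tauto
      rw [hempty]
      simp
  -- bound the sum over pairs by a sum over sizes
  have step2 : (∑ p ∈ (Finset.univ.filter (fun p : Finset (Fin n) × Finset (Fin n) =>
        p.1.card ≤ x ∧ 1 ≤ p.2.card ∧ p.2.card ≤ d ∧ Disjoint p.1 p.2)), g p.1.card)
      ≤ ∑ j ∈ Finset.range (x+1),
          (n.choose j : ℝ) * ((((n - j) * n^(d-1)) : ℕ) : ℝ) * g j := by
    rw [Finset.sum_filter, ← Finset.univ_product_univ, Finset.sum_product]
    have per_I : ∀ I : Finset (Fin n),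
        (∑ J : Finset (Fin n), if (I.card ≤ x ∧ 1 ≤ J.card ∧ J.card ≤ d ∧ Disjoint I J)
            then g I.card else 0)
        ≤ (if I.card ≤ x then (((n - I.card) * n^(d-1) : ℕ) : ℝ) else 0) * g I.card := by
      intro I
      have e1 : (∑ J : Finset (Fin n), if (I.card ≤ x ∧ 1 ≤ J.card ∧ J.card ≤ d ∧ Disjoint I J)
            then g I.card else 0)
          = (((univ.filter (fun J : Finset (Fin n) =>
              I.card ≤ x ∧ 1 ≤ J.card ∧ J.card ≤ d ∧ Disjoint I J)).card : ℕ) : ℝ) * g I.card := by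
        rw [← Finset.sum_filter, Finset.sum_const, nsmul_eq_mul]
      rw [e1]
      exact mul_le_mul_of_nonneg_right (hcount I) (hg0 _)
    refine le_trans (Finset.sum_le_sum (fun I _ => per_I I)) ?_
    -- group by cardinality
    rw [← Finset.powerset_univ, Finset.sum_powerset]
    have inner : ∀ j : ℕ, (∑ I ∈ Finset.powersetCard j (univ : Finset (Fin n)),
        (if I.card ≤ x then (((n - I.card) * n^(d-1) : ℕ) : ℝ) else 0) * g I.card)
        = (n.choose j : ℝ) * ((if j ≤ x then (((n - j) * n^(d-1) : ℕ) : ℝ) else 0) * g j) := by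
      intro j
      have : ∀ I ∈ Finset.powersetCard j (univ : Finset (Fin n)),
          (if I.card ≤ x then (((n - I.card) * n^(d-1) : ℕ) : ℝ) else 0) * g I.card
          = (if j ≤ x then (((n - j) * n^(d-1) : ℕ) : ℝ) else 0) * g j := by
        intro I hI
        rw [(Finset.mem_powersetCard.mp hI).2]
      rw [Finset.sum_congr rfl this, Finset.sum_const, nsmul_eq_mul,
        Finset.card_powersetCard, Finset.card_univ, Fintype.card_fin]
    rw [Finset.sum_congr rfl (fun j _ => inner j)]
    have hcardu : (univ : Finset (Fin n)).card = n := by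
      rw [Finset.card_univ, Fintype.card_fin]
    rw [hcardu]
    have swap : ∀ j : ℕ, (n.choose j : ℝ) * ((if j ≤ x then (((n - j) * n^(d-1) : ℕ) : ℝ) else 0) * g j)
        = if j ≤ x then (n.choose j : ℝ) * ((((n - j) * n^(d-1)) : ℕ) : ℝ) * g j else 0 := by
      intro j
      split_ifs <;> ring
    rw [Finset.sum_congr rfl (fun j _ => swap j), ← Finset.sum_filter]
    have hfilt : (Finset.range (n+1)).filter (fun j => j ≤ x) = Finset.range (x+1) := by
      ext j
      simp only [Finset.mem_filter, Finset.mem_range]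
      omega
    rw [hfilt]
  -- final numeric bound on the grouped sum
  have hAinv : ∀ A : ℝ, A ≠ 0 → A * (A * N)⁻¹ = N⁻¹ := by
    intro A hA
    rw [mul_inv, ← mul_assoc, mul_inv_cancel₀ hA, one_mul]
  have step3 : (∑ j ∈ Finset.range (x+1),
      (n.choose j : ℝ) * ((((n - j) * n^(d-1)) : ℕ) : ℝ) * g j) ≤ 1 - 2⁻¹ * N⁻¹ := by
    rw [Finset.sum_range_succ]
    have hmain : (n.choose x : ℝ) * ((((n - x) * n^(d-1)) : ℕ) : ℝ) * g x ≤ 1 - N⁻¹ := by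
      have c1 : (n.choose x : ℝ) ≤ N^x := by
        rw [hN]; exact_mod_cast Nat.choose_le_pow n x
      have c2 : ((((n - x) * n^(d-1)) : ℕ) : ℝ) ≤ (N - 1) * N^(d-1) := by
        have : ((n:ℕ) - x) * n^(d-1) ≤ (n - 1) * n^(d-1) :=
          Nat.mul_le_mul_right _ (by omega)
        calc ((((n - x) * n^(d-1)) : ℕ) : ℝ) ≤ (((n-1) * n^(d-1) : ℕ) : ℝ) := by exact_mod_cast this
        _ = (N - 1) * N^(d-1) := by
            rw [hN]
            push_cast [Nat.cast_sub (by omega : 1 ≤ n)]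
            ring
      have c3 : g x ≤ (N^(d+x))⁻¹ := by rw [hgx]; exact hεn
      have hpos1 : (0:ℝ) ≤ (n.choose x : ℝ) := by positivity
      have hNd1 : (0:ℝ) ≤ (N-1) * N^(d-1) := by
        apply mul_nonneg (by linarith)
        positivity
      calc (n.choose x : ℝ) * ((((n - x) * n^(d-1)) : ℕ) : ℝ) * g x
          ≤ N^x * ((N - 1) * N^(d-1)) * (N^(d+x))⁻¹ := by
            apply mul_le_mul
            · exact mul_le_mul c1 c2 (by positivity) (by positivity)
            · exact c3
            · exact hg0 x
            · positivity
        _ = (N - 1) * (N^x * N^(d-1) * (N^x * N^(d-1) * N)⁻¹) := by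
            have : N^(d+x) = N^x * N^(d-1) * N := by
              rw [mul_assoc, ← pow_succ, ← pow_add]
              congr 1
              omega
            rw [this]; ring
        _ = (N - 1) * N⁻¹ := by rw [hAinv (N^x * N^(d-1)) (by positivity)]
        _ = 1 - N⁻¹ := by
            field_simp
    have hsmall : (∑ j ∈ Finset.range x,
        (n.choose j : ℝ) * ((((n - j) * n^(d-1)) : ℕ) : ℝ) * g j) ≤ 2⁻¹ * N⁻¹ := by
      have hone : ∀ j ∈ Finset.range x,
          (n.choose j : ℝ) * ((((n - j) * n^(d-1)) : ℕ) : ℝ) * g j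
          ≤ N^(x-1) * N^d * ε^2 := by
        intro j hj
        rw [Finset.mem_range] at hj
        have c1 : (n.choose j : ℝ) ≤ N^(x-1) := by
          calc (n.choose j : ℝ) ≤ N^j := by rw [hN]; exact_mod_cast Nat.choose_le_pow n j
          _ ≤ N^(x-1) := pow_le_pow_right₀ (by linarith) (by omega)
        have c2 : ((((n - j) * n^(d-1)) : ℕ) : ℝ) ≤ N^d := by
          have hc : ((n:ℕ) - j) * n^(d-1) ≤ n^d := by
            calc ((n:ℕ) - j) * n^(d-1) ≤ n * n^(d-1) := Nat.mul_le_mul_right _ (by omega)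
            _ = n^d := by rw [← pow_succ']; congr 1; omega
          calc ((((n - j) * n^(d-1)) : ℕ) : ℝ) ≤ ((n^d : ℕ) : ℝ) := by exact_mod_cast hc
          _ = N^d := by rw [hN]; push_cast; ring
        have c3 : g j ≤ ε^2 := hga2 j hj
        apply mul_le_mul
        · exact mul_le_mul c1 c2 (by positivity) (by positivity)
        · exact c3
        · exact hg0 j
        · positivity
      calc (∑ j ∈ Finset.range x,
          (n.choose j : ℝ) * ((((n - j) * n^(d-1)) : ℕ) : ℝ) * g j)
          ≤ ∑ j ∈ Finset.range x, N^(x-1) * N^d * ε^2 := Finset.sum_le_sum hone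
      _ = (x:ℝ) * (N^(x-1) * N^d * ε^2) := by
          rw [Finset.sum_const, Finset.card_range, nsmul_eq_mul]
      _ ≤ (x:ℝ) * (N^(x-1) * N^d * ((N^(d+x))⁻¹ * (N^(d+x))⁻¹)) := by
          apply mul_le_mul_of_nonneg_left _ (by positivity)
          apply mul_le_mul_of_nonneg_left _ (by positivity)
          calc ε^2 = ε * ε := sq ε
          _ ≤ (N^(d+x))⁻¹ * (N^(d+x))⁻¹ := mul_le_mul hεn hεn hε0 (by positivity)
      _ = ((x:ℝ) * (N^(d+x))⁻¹) * (N^(x-1) * N^d * (N^(d+x))⁻¹) := by ring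
      _ ≤ 2⁻¹ * N⁻¹ := by
          apply mul_le_mul
          · -- x / N^(d+x) ≤ 1/2
            have h2x : 2 * x ≤ n^(d+x) := by
              have l1 : x < 2^x := Nat.lt_two_pow_self
              have l2 : 2^(x+1) ≤ 2^(d+x) := Nat.pow_le_pow_right (by norm_num) (by omega)
              have l3 : 2^(d+x) ≤ n^(d+x) := Nat.pow_le_pow_left hn2 _
              calc 2 * x ≤ 2 * 2^x := by omega
              _ = 2^(x+1) := by rw [pow_succ]; ring
              _ ≤ n^(d+x) := le_trans l2 l3
            have hNk : (0:ℝ) < N^(d+x) := by positivity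
            rw [← div_eq_mul_inv, div_le_iff₀ hNk]
            have : ((2 * x : ℕ) : ℝ) ≤ ((n^(d+x) : ℕ) : ℝ) := by exact_mod_cast h2x
            push_cast at this
            rw [← hN] at this
            linarith
          · -- N^(x-1) * N^d * (N^(d+x))⁻¹ = N⁻¹ ≤ N⁻¹
            have : N^(d+x) = N^(x-1) * N^d * N := by
              rw [mul_assoc, ← pow_succ, ← pow_add]
              congr 1
              omega
            rw [this, hAinv (N^(x-1) * N^d) (by positivity)]
          · positivity
          · norm_num
    have : (∑ j ∈ Finset.range x,
        (n.choose j : ℝ) * ((((n - j) * n^(d-1)) : ℕ) : ℝ) * g j)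
        + (n.choose x : ℝ) * ((((n - x) * n^(d-1)) : ℕ) : ℝ) * g x
        ≤ 2⁻¹ * N⁻¹ + (1 - N⁻¹) := add_le_add hsmall hmain
    have hNinv : (0:ℝ) < N⁻¹ := by positivity
    linarith
  -- per-term identity and final assembly
  have hterm : ∀ p : Finset (Fin n) × Finset (Fin n),
      p.1.card ≤ x → 1 ≤ p.2.card → p.2.card ≤ d → Disjoint p.1 p.2 →
      (((2 ^ n - 2 ^ (n - p.1.card - 1)) ^ m : ℕ) : ℝ) = 2^(n*m) * g p.1.card := by
    intro p h1 h2 h3 h4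
    set a := p.1.card with ha
    have hab : a + p.2.card ≤ n := by
      rw [ha, ← Finset.card_union_of_disjoint h4]
      calc (p.1 ∪ p.2).card ≤ (univ : Finset (Fin n)).card := Finset.card_le_univ _
      _ = n := by rw [Finset.card_univ, Fintype.card_fin]
    have han : a + 1 ≤ n := by omega
    have hle : (2:ℕ) ^ (n - a - 1) ≤ 2 ^ n := Nat.pow_le_pow_right (by norm_num) (by omega)
    have e1 : (((2 ^ n - 2 ^ (n - a - 1)) : ℕ) : ℝ) = (2:ℝ)^n - 2^(n-a-1) := by
      push_cast [Nat.cast_sub hle]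
      ring
    have e2 : (2:ℝ)^(n-a-1) = 2^n * ((2:ℝ)⁻¹)^(a+1) := by
      have hp : (2:ℝ)^(n-a-1) * 2^(a+1) = 2^n := by
        rw [← pow_add]
        congr 1
        omega
      calc (2:ℝ)^(n-a-1) = (2:ℝ)^(n-a-1) * (2^(a+1) * ((2:ℝ)⁻¹)^(a+1)) := by
            rw [← mul_pow]
            norm_num
      _ = ((2:ℝ)^(n-a-1) * 2^(a+1)) * ((2:ℝ)⁻¹)^(a+1) := by ring
      _ = 2^n * ((2:ℝ)⁻¹)^(a+1) := by rw [hp]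
    push_cast
    rw [Nat.cast_sub hle]
    push_cast
    rw [show ((2:ℝ)^n - 2^(n-a-1)) = 2^n * (1 - ((2:ℝ)⁻¹)^(a+1)) by rw [e2]; ring]
    rw [mul_pow, ← pow_mul]
  -- conclude
  have hcast : (∑ p ∈ (Finset.univ.filter (fun p : Finset (Fin n) × Finset (Fin n) =>
        p.1.card ≤ x ∧ 1 ≤ p.2.card ∧ p.2.card ≤ d ∧ Disjoint p.1 p.2)),
      (((2 ^ n - 2 ^ (n - p.1.card - 1)) ^ m : ℕ) : ℝ)) < (2:ℝ) ^ (n * m) := by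
    have e : (∑ p ∈ (Finset.univ.filter (fun p : Finset (Fin n) × Finset (Fin n) =>
        p.1.card ≤ x ∧ 1 ≤ p.2.card ∧ p.2.card ≤ d ∧ Disjoint p.1 p.2)),
      (((2 ^ n - 2 ^ (n - p.1.card - 1)) ^ m : ℕ) : ℝ))
        = 2^(n*m) * (∑ p ∈ (Finset.univ.filter (fun p : Finset (Fin n) × Finset (Fin n) =>
        p.1.card ≤ x ∧ 1 ≤ p.2.card ∧ p.2.card ≤ d ∧ Disjoint p.1 p.2)), g p.1.card) := by
      rw [Finset.mul_sum]
      refine Finset.sum_congr rfl (fun p hp => ?_)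
      rw [Finset.mem_filter] at hp
      obtain ⟨-, h1, h2, h3, h4⟩ := hp
      exact hterm p h1 h2 h3 h4
    rw [e]
    have hS : (∑ p ∈ (Finset.univ.filter (fun p : Finset (Fin n) × Finset (Fin n) =>
        p.1.card ≤ x ∧ 1 ≤ p.2.card ∧ p.2.card ≤ d ∧ Disjoint p.1 p.2)), g p.1.card) < 1 := by
      have hNinv : (0:ℝ) < N⁻¹ := by positivity
      calc _ ≤ _ := le_trans step2 step3
      _ < 1 := by linarith
    calc (2:ℝ)^(n*m) * _ < 2^(n*m) * 1 := by
          apply mul_lt_mul_of_pos_left hS (by positivity)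
    _ = 2^(n*m) := mul_one _
  exact_mod_cast hcast

/-- Probabilistic existence: for positive integers `d, x`, any `n ≥ max{2d, d+x}`, and
any positive integer `m ≥ 2^{x+1}·(d+x)·ln n`, there exists an `(m,n,d,x)` X-code. -/
theorem xcode_probabilistic_existence (d x n m : ℕ) (hd : 0 < d) (hx : 0 < x)
    (hn : max (2 * d) (d + x) ≤ n) (hm : 0 < m)
    (h : (2 : ℝ) ^ (x + 1) * ((d : ℝ) + (x : ℝ)) * Real.log n ≤ (m : ℝ)) :
    ∃ X : Finset (Fin m → ZMod 2), X.card = n ∧ IsXCode d x X := by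
  classical
  set Bcol : Finset (Fin n) × Finset (Fin n) → Finset (Fin n → ZMod 2) := fun p =>
    Finset.univ.filter (fun v => ¬((∑ i ∈ p.2, v i) = 1 ∧ ∀ i ∈ p.1, v i = 0)) with hBcoldef
  set BadSet : Finset (Fin n) × Finset (Fin n) → Finset (Fin m → Fin n → ZMod 2) := fun p =>
    Fintype.piFinset (fun _ => Bcol p) with hBaddef
  set P : Finset (Finset (Fin n) × Finset (Fin n)) :=
    Finset.univ.filter (fun p => p.1.card ≤ x ∧ 1 ≤ p.2.card ∧ p.2.card ≤ d ∧ Disjoint p.1 p.2)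
    with hPdef
  have hcard_fun : Fintype.card (Fin n → ZMod 2) = 2 ^ n := by
    rw [Fintype.card_fun, ZMod.card, Fintype.card_fin]
  have hBcol : ∀ p ∈ P, (Bcol p).card ≤ 2 ^ n - 2 ^ (n - p.1.card - 1) := by
    intro p hp
    rw [hPdef, Finset.mem_filter] at hp
    obtain ⟨-, h1, h2, h3, h4⟩ := hp
    have hJ : p.2.Nonempty := Finset.card_pos.mp h2
    have hgood := good_col_count p.1 p.2 hJ h4
    set G := Finset.univ.filter
      (fun v : Fin n → ZMod 2 => (∑ i ∈ p.2, v i) = 1 ∧ ∀ i ∈ p.1, v i = 0) with hG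
    have hBG : Bcol p = Finset.univ \ G := by
      rw [hBcoldef]
      simp only []
      rw [hG, Finset.filter_not]
    rw [hBG, Finset.card_sdiff_of_subset (Finset.filter_subset _ _), Finset.card_univ, hcard_fun]
    exact Nat.sub_le_sub_left hgood (2^n)
  have hBadcard : ∀ p, (BadSet p).card = (Bcol p).card ^ m := by
    intro p
    rw [hBaddef]
    rw [Fintype.card_piFinset]
    rw [Finset.prod_const, Finset.card_univ, Fintype.card_fin]
  have htotal : Fintype.card (Fin m → Fin n → ZMod 2) = 2 ^ (n * m) := by
    rw [Fintype.card_fun, hcard_fun, Fintype.card_fin, ← pow_mul]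
  have hlt : (P.biUnion BadSet).card < Fintype.card (Fin m → Fin n → ZMod 2) := by
    calc (P.biUnion BadSet).card ≤ ∑ p ∈ P, (BadSet p).card := Finset.card_biUnion_le
    _ = ∑ p ∈ P, (Bcol p).card ^ m := Finset.sum_congr rfl (fun p _ => hBadcard p)
    _ ≤ ∑ p ∈ P, (2 ^ n - 2 ^ (n - p.1.card - 1)) ^ m :=
        Finset.sum_le_sum (fun p hp => Nat.pow_le_pow_left (hBcol p hp) m)
    _ < 2 ^ (n * m) := core_sum_lt d x n m hd hx hn hm h
    _ = Fintype.card (Fin m → Fin n → ZMod 2) := htotal.symm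
  obtain ⟨ω, hω⟩ : ∃ ω : Fin m → Fin n → ZMod 2, ω ∉ P.biUnion BadSet := by
    by_contra hc
    push_neg at hc
    have heq : P.biUnion BadSet = Finset.univ := Finset.eq_univ_iff_forall.mpr hc
    rw [heq, Finset.card_univ] at hlt
    exact lt_irrefl _ hlt
  have hgood : ∀ I J : Finset (Fin n), I.card ≤ x → 1 ≤ J.card → J.card ≤ d → Disjoint I J →
      ∃ j : Fin m, (∑ i ∈ J, ω j i) = 1 ∧ ∀ i ∈ I, ω j i = 0 := by
    intro I J h1 h2 h3 h4
    have hP : (I, J) ∈ P := by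
      rw [hPdef, Finset.mem_filter]
      exact ⟨Finset.mem_univ _, h1, h2, h3, h4⟩
    have hnotbad : ω ∉ BadSet (I, J) := fun hmem => hω (Finset.mem_biUnion.mpr ⟨(I,J), hP, hmem⟩)
    rw [hBaddef] at hnotbad
    rw [Fintype.mem_piFinset] at hnotbad
    push_neg at hnotbad
    obtain ⟨j, hj⟩ := hnotbad
    refine ⟨j, ?_⟩
    by_contra hq
    exact hj (Finset.mem_filter.mpr ⟨Finset.mem_univ _, hq⟩)
  set u : Fin n → (Fin m → ZMod 2) := fun i j => ω j i with hu
  have huinj : Function.Injective u := by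
    intro i i' hii
    by_contra hne
    have hdisj : Disjoint ({i'} : Finset (Fin n)) {i} :=
      Finset.disjoint_singleton.mpr (fun hcon => hne hcon.symm)
    obtain ⟨j, hj1, hj2⟩ := hgood {i'} {i}
      (by simp; omega) (by simp) (by simp; omega) hdisj
    rw [Finset.sum_singleton] at hj1
    have h0 : ω j i' = 0 := hj2 i' (Finset.mem_singleton_self i')
    have hcon : u i j = u i' j := congrFun hii j
    rw [hu] at hcon
    simp only at hcon
    rw [hj1, h0] at hcon
    exact one_ne_zero hcon
  refine ⟨Finset.univ.image u, ?_, ?_⟩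
  · rw [Finset.card_image_of_injective _ huinj, Finset.card_univ, Fintype.card_fin]
  · intro S₁ S₂ hS₁ hS₂ hdisj hc1 hc2 hc3
    set I : Finset (Fin n) := Finset.univ.filter (fun i => u i ∈ S₁) with hI
    set J : Finset (Fin n) := Finset.univ.filter (fun i => u i ∈ S₂) with hJ
    have him : ∀ (S : Finset (Fin m → ZMod 2)), S ⊆ Finset.univ.image u →
        (Finset.univ.filter (fun i => u i ∈ S)).image u = S := by
      intro S hS
      ext s
      simp only [Finset.mem_image, Finset.mem_filter, Finset.mem_univ, true_and]
      constructor
      · rintro ⟨i, hi, rfl⟩; exact hi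
      · intro hs
        obtain ⟨i, -, rfl⟩ := Finset.mem_image.mp (hS hs)
        exact ⟨i, hs, rfl⟩
    have hIim : I.image u = S₁ := him S₁ hS₁
    have hJim : J.image u = S₂ := him S₂ hS₂
    have hIcard : I.card = S₁.card := by
      rw [← hIim, Finset.card_image_of_injective _ huinj]
    have hJcard : J.card = S₂.card := by
      rw [← hJim, Finset.card_image_of_injective _ huinj]
    have hdisjIJ : Disjoint I J := by
      rw [Finset.disjoint_left]
      intro i hiI hiJ
      rw [hI, Finset.mem_filter] at hiI
      rw [hJ, Finset.mem_filter] at hiJ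
      exact Finset.disjoint_left.mp hdisj hiI.2 hiJ.2
    obtain ⟨j, hj1, hj2⟩ := hgood I J (by rw [hIcard]; exact hc1)
      (by rw [hJcard]; exact hc2) (by rw [hJcard]; exact hc3) hdisjIJ
    refine ⟨j, ?_, ?_⟩
    · rw [← hJim, Finset.sum_image (fun i _ i' _ hii => huinj hii)]
      exact hj1
    · intro s hs
      rw [← hIim] at hs
      obtain ⟨i, hiI, rfl⟩ := Finset.mem_image.mp hs
      exact hj2 i hiI
end
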